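/- arXiv:1301.6594 — 8 statements merged into one kernel-verified Lean document; each statement's English description precedes it below -/
import Mathlib

section
/- Let d > -1. For b ∈ ℝ \ {0}, the complex number ib satisfies 1 + e^(-ib) + 2d·(1 - e^(-ib))/(ib) = 0 if and only if cos b ≠ 1 and -(b/2)·cot(b/2) = d. -/
open Complex

theorem stmt_3 (d : ℝ) (hd : -1 < d) (b : ℝ) (hb : b ≠ 0) :
    (1 + Complex.exp (-(Complex.I * b)) +
        2 * (d : ℂ) * (1 - Complex.exp (-(Complex.I * b))) / (Complex.I * b) = 0) ↔
      (Real.cos b ≠ 1 ∧ -(b / 2) * Real.cot (b / 2) = d) := by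
  set s := Real.sin (b / 2) with hs_def
  set c := Real.cos (b / 2) with hc_def
  have hsc : s ^ 2 + c ^ 2 = 1 := Real.sin_sq_add_cos_sq (b / 2)
  have hsinb : Real.sin b = 2 * s * c := by
    rw [show b = 2 * (b / 2) by ring, Real.sin_two_mul]
  have hcosb : Real.cos b = 1 - 2 * s ^ 2 := by
    rw [show b = 2 * (b / 2) by ring, Real.cos_two_mul]
    nlinarith [hsc]
  have hIb : (Complex.I * (b : ℂ)) ≠ 0 := by
    simp [Complex.I_ne_zero, Complex.ofReal_ne_zero, hb]
  have he : Complex.exp (-(Complex.I * b)) =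
      (Real.cos b : ℂ) - (Real.sin b : ℂ) * Complex.I := by
    rw [show -(Complex.I * (b : ℂ)) = ((-b : ℝ) : ℂ) * Complex.I by push_cast; ring,
      Complex.exp_mul_I]
    push_cast
    simp [Real.cos_neg, Real.sin_neg]
    ring
  have key : (1 + Complex.exp (-(Complex.I * b)) +
      2 * (d : ℂ) * (1 - Complex.exp (-(Complex.I * b))) / (Complex.I * b) = 0) ↔
      (b * c + 2 * d * s = 0) := by
    rw [he, add_div' _ _ _ hIb, div_eq_zero_iff]
    simp only [hIb, or_false]
    rw [Complex.ext_iff]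
    simp only [Complex.add_re, Complex.add_im, Complex.mul_re, Complex.mul_im, Complex.sub_re,
      Complex.sub_im, Complex.one_re, Complex.one_im, Complex.I_re, Complex.I_im,
      Complex.ofReal_re, Complex.ofReal_im, Complex.zero_re, Complex.zero_im,
      Complex.re_ofNat, Complex.im_ofNat]
    rw [hsinb, hcosb]
    constructor
    · rintro ⟨h1, h2⟩
      have h1' : s * (b * c + 2 * d * s) = 0 := by linear_combination h1 / 2
      have h2' : c * (b * c + 2 * d * s) = 0 := by linear_combination h2 / 2 + b * hsc
      linear_combination s * h1' + c * h2' - (b * c + 2 * d * s) * hsc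
    · intro h
      constructor
      · linear_combination 2 * s * h
      · linear_combination 2 * c * h - 2 * b * hsc
  rw [key]
  constructor
  · intro h
    have hs0 : s ≠ 0 := by
      intro hs0
      have hc0 : c ≠ 0 := by
        intro hc0; rw [hs0, hc0] at hsc; norm_num at hsc
      rw [hs0] at h
      have : b * c = 0 := by linarith
      rcases mul_eq_zero.mp this with h' | h'
      · exact hb h'
      · exact hc0 h'
    refine ⟨?_, ?_⟩
    · rw [hcosb]
      intro hcontra
      have : s ^ 2 = 0 := by linarith
      exact hs0 (pow_eq_zero_iff (by norm_num) |>.mp this)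
    · rw [Real.cot_eq_cos_div_sin, ← hs_def, ← hc_def]
      field_simp
      linarith
  · rintro ⟨h1, h2⟩
    have hs0 : s ≠ 0 := by
      intro hs0
      apply h1
      rw [hcosb, hs0]; ring
    rw [Real.cot_eq_cos_div_sin, ← hs_def, ← hc_def] at h2
    field_simp at h2
    linarith
end

section
/- If |k| < 1 and d ∈ ℝ, θ ∈ [0,1], then the function f_{θd,k}(μ) = 1 - k·e^(-μ) + θd(1-k)(1-e^(-μ))/μ has no zero on the imaginary axis away from the origin: for every nonzero real b, f_{θd,k}(ib) ≠ 0. -/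
theorem stmt_5 (d k θ : ℝ) (hk : |k| < 1) (hθ : θ ∈ Set.Icc (0:ℝ) 1)
    (b : ℝ) (hb : b ≠ 0) :
    1 - (k : ℂ) * Complex.exp (-(Complex.I * b)) +
      (θ : ℂ) * (d : ℂ) * (1 - (k : ℂ)) * (1 - Complex.exp (-(Complex.I * b))) /
        (Complex.I * b) ≠ 0 := by
  intro h
  have hib : (Complex.I * (b:ℂ)) ≠ 0 :=
    mul_ne_zero Complex.I_ne_zero (Complex.ofReal_ne_zero.mpr hb)
  set E := Complex.exp (-(Complex.I * b)) with hE
  have h2 : (1 - (k:ℂ) * E) * (Complex.I * b) +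
      (θ:ℂ)*(d:ℂ)*(1-(k:ℂ)) * (1 - E) = 0 := by
    have h' := congrArg (fun z => z * (Complex.I * b)) h
    simp only [add_mul, div_mul_cancel₀ _ hib, zero_mul] at h'
    linear_combination h'
  have hz : -(Complex.I * (b:ℂ)) = ((-b : ℝ) : ℂ) * Complex.I := by
    push_cast; ring
  have hEre : E.re = Real.cos b := by
    rw [hE, hz, Complex.exp_ofReal_mul_I_re, Real.cos_neg]
  have hEim : E.im = -Real.sin b := by
    rw [hE, hz, Complex.exp_ofReal_mul_I_im, Real.sin_neg]
  have hre := congrArg Complex.re h2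
  have him := congrArg Complex.im h2
  simp [Complex.add_re, Complex.add_im, Complex.mul_re, Complex.mul_im,
    Complex.sub_re, Complex.sub_im, hEre, hEim] at hre him
  have pyth := Real.sin_sq_add_cos_sq b
  have key : b * ((1 - Real.cos b) * (1 + k)) = 0 := by
    linear_combination -(Real.sin b) * hre + (1 - Real.cos b) * him - b*k*pyth
  obtain ⟨hk1, hk2⟩ := abs_lt.mp hk
  have h1k : (0:ℝ) < 1 + k := by linarith
  have hcos : Real.cos b = 1 := by
    rcases mul_eq_zero.mp key with h' | h'
    · exact absurd h' hb
    · rcases mul_eq_zero.mp h' with h'' | h'' <;> linarith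
  have hsin : Real.sin b = 0 := by nlinarith
  rw [hcos, hsin] at him
  rcases hb.lt_or_gt with h' | h' <;> nlinarith
end

section
/- Let |d| < 1, |k| < 1, β > 0 with e^(-β) > k² and a := d·(e^(-β) - k)/(1 - k). Then for any C¹ solution ρ of the linear system ρ_t + ρ_x = 0 on (0,∞)×(0,1) with boundary condition ρ(t,0) = kρ(t,1) + (k-1)dW(t) where W(t) = ∫₀¹ρ(t,x)dx, the Lyapunov function L(t) = ∫₀¹ e^(-βx) ρ²(t,x) dx + a·W(t)² satisfies L̇(t) ≤ -β(1 - d²(e^β - 1)²e^(-β)β^(-2)) ∫₀¹ e^(-βx) ρ²(t,x) dx for all t ≥ 0. -/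
open intervalIntegral

open MeasureTheory Metric in
lemma my_hasDerivAt_int (φ φt : ℝ → ℝ → ℝ)
    (hc : Continuous fun p : ℝ × ℝ => φ p.1 p.2)
    (hct : Continuous fun p : ℝ × ℝ => φt p.1 p.2)
    (hd : ∀ t x, HasDerivAt (fun s => φ s x) (φt t x) t) (t₀ : ℝ) :
    HasDerivAt (fun t => ∫ x in (0:ℝ)..1, φ t x) (∫ x in (0:ℝ)..1, φt t₀ x) t₀ := by
  have hK : IsCompact ((Set.Icc (t₀-1) (t₀+1)) ×ˢ (Set.Icc (0:ℝ) 1)) :=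
    isCompact_Icc.prod isCompact_Icc
  obtain ⟨C, hC⟩ := hK.exists_bound_of_continuousOn hct.continuousOn
  have key := intervalIntegral.hasDerivAt_integral_of_dominated_loc_of_deriv_le
    (F := φ) (F' := φt) (x₀ := t₀) (a := (0:ℝ)) (b := 1) (bound := fun _ => C)
    (μ := volume) (s := ball t₀ 1) (ball_mem_nhds t₀ one_pos) ?_ ?_ ?_ ?_ ?_ ?_
  · exact key.2
  · exact Filter.Eventually.of_forall fun t =>
      (hc.comp (Continuous.prodMk_right t)).aestronglyMeasurable
  · exact (hc.comp (Continuous.prodMk_right t₀)).intervalIntegrable 0 1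
  · exact (hct.comp (Continuous.prodMk_right t₀)).aestronglyMeasurable
  · refine Filter.Eventually.of_forall fun x hx s hs => ?_
    rw [Set.uIoc_of_le (by norm_num : (0:ℝ) ≤ 1)] at hx
    rw [mem_ball, Real.dist_eq, abs_sub_lt_iff] at hs
    exact hC (s, x) ⟨⟨by linarith [hs.2], by linarith [hs.1]⟩, ⟨le_of_lt hx.1, hx.2⟩⟩
  · exact intervalIntegrable_const
  · exact Filter.Eventually.of_forall fun x _ s _ => hd s x



open MeasureTheory Metric in
lemma cs_aux (β : ℝ) (hβ : 0 < β) (g : ℝ → ℝ) (hg : Continuous g) :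
    (∫ x in (0:ℝ)..1, g x)^2 ≤ ((Real.exp β - 1)/β) * ∫ x in (0:ℝ)..1, Real.exp (-β*x) * g x^2 := by
  have hEb : 1 < Real.exp β := by
    have := Real.add_one_le_exp β; linarith
  set A := (Real.exp β - 1)/β with hAdef
  have hA : 0 < A := div_pos (by linarith) hβ
  have hAint : ∫ x in (0:ℝ)..1, Real.exp (β*x) = A := by
    have hder : ∀ x ∈ Set.uIcc (0:ℝ) 1, HasDerivAt (fun y => Real.exp (β*y)/β) (Real.exp (β*x)) x := by
      intro x _
      have h1 : HasDerivAt (fun y : ℝ => Real.exp (β*y)) (Real.exp (β*x)*β) x := by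
        have := (Real.hasDerivAt_exp (β*x)).comp x ((hasDerivAt_id x).const_mul β)
        simpa [Function.comp_def, mul_comm] using this
      have := h1.div_const β
      simpa [mul_div_cancel_right₀ _ hβ.ne'] using this
    rw [intervalIntegral.integral_eq_sub_of_hasDerivAt hder
      ((Real.continuous_exp.comp (continuous_const.mul continuous_id)).intervalIntegrable 0 1)]
    simp [hAdef]
    ring
  set B := ∫ x in (0:ℝ)..1, g x with hB
  set I := ∫ x in (0:ℝ)..1, Real.exp (-β*x) * g x^2 with hI
  have key : 0 ≤ ∫ x in (0:ℝ)..1, (B*Real.exp (β*x/2) - A*(Real.exp (-(β*x/2))*g x))^2 :=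
    intervalIntegral.integral_nonneg (by norm_num) (fun x _ => sq_nonneg _)
  have hc1 : Continuous fun x : ℝ => Real.exp (β*x) :=
    Real.continuous_exp.comp (continuous_const.mul continuous_id)
  have hc2 : Continuous fun x : ℝ => Real.exp (-β*x) * g x^2 :=
    (Real.continuous_exp.comp (continuous_const.mul continuous_id)).mul (hg.pow 2)
  have expand : ∫ x in (0:ℝ)..1, (B*Real.exp (β*x/2) - A*(Real.exp (-(β*x/2))*g x))^2
      = B^2*A - 2*A*B*B + A^2*I := by
    have hpt : ∀ x, (B*Real.exp (β*x/2) - A*(Real.exp (-(β*x/2))*g x))^2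
        = B^2*Real.exp (β*x) - 2*A*B*g x + A^2*(Real.exp (-β*x)*g x^2) := by
      intro x
      have h1 : Real.exp (β*x/2) * Real.exp (β*x/2) = Real.exp (β*x) := by
        rw [← Real.exp_add]; ring_nf
      have h2 : Real.exp (β*x/2) * Real.exp (-(β*x/2)) = 1 := by
        rw [← Real.exp_add]; simp
      have h3 : Real.exp (-(β*x/2)) * Real.exp (-(β*x/2)) = Real.exp (-β*x) := by
        rw [← Real.exp_add]; ring_nf
      linear_combination (B^2)*h1 - 2*A*B*(g x)*h2 + A^2*(g x)^2*h3
    rw [intervalIntegral.integral_congr (g := fun x => B^2*Real.exp (β*x) - 2*A*B*g x + A^2*(Real.exp (-β*x)*g x^2)) (fun x _ => hpt x)]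
    rw [intervalIntegral.integral_add (f := fun x => B^2*Real.exp (β*x) - 2*A*B*g x) (g := fun x => A^2*(Real.exp (-β*x)*g x^2)) (((continuous_const.mul hc1).sub (continuous_const.mul hg)).intervalIntegrable 0 1)
      ((continuous_const.mul hc2).intervalIntegrable 0 1),
      intervalIntegral.integral_sub (f := fun x => B^2*Real.exp (β*x)) (g := fun x => 2*A*B*g x) ((continuous_const.mul hc1).intervalIntegrable 0 1)
      ((continuous_const.mul hg).intervalIntegrable 0 1),
      intervalIntegral.integral_const_mul, intervalIntegral.integral_const_mul,
      intervalIntegral.integral_const_mul, hAint, ← hB, ← hI]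
  rw [expand] at key
  nlinarith [hA, key]



open MeasureTheory Metric in
theorem stmt_10 (d k β : ℝ) (hd : |d| < 1) (hk : |k| < 1) (hβ : 0 < β)
    (hβk : k ^ 2 < Real.exp (-β)) (ρ : ℝ → ℝ → ℝ)
    (hρ : ContDiff ℝ 1 (fun p : ℝ × ℝ => ρ p.1 p.2))
    (hpde : ∀ t ≥ (0:ℝ), ∀ x ∈ Set.Icc (0:ℝ) 1,
      deriv (fun s => ρ s x) t + deriv (fun y => ρ t y) x = 0)
    (hbc : ∀ t ≥ (0:ℝ),
      ρ t 0 = k * ρ t 1 + (k - 1) * d * ∫ x in (0:ℝ)..1, ρ t x) :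
    let a := d * (Real.exp (-β) - k) / (1 - k)
    let W := fun t => ∫ x in (0:ℝ)..1, ρ t x
    let L := fun t => (∫ x in (0:ℝ)..1, Real.exp (-β * x) * ρ t x ^ 2) + a * W t ^ 2
    ∀ t ≥ (0:ℝ), ∃ D : ℝ, HasDerivAt L D t ∧
      D ≤ -β * (1 - d ^ 2 * (Real.exp β - 1) ^ 2 * Real.exp (-β) * β⁻¹ ^ 2) *
        ∫ x in (0:ℝ)..1, Real.exp (-β * x) * ρ t x ^ 2 := by
  intro a W L t ht
  set f : ℝ × ℝ → ℝ := fun p => ρ p.1 p.2 with hfdef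
  have hfc : Continuous f := hρ.continuous
  have hfd : ∀ q : ℝ × ℝ, HasFDerivAt f (fderiv ℝ f q) q := fun q =>
    (hρ.differentiable one_ne_zero q).hasFDerivAt
  have hcfd : Continuous (fderiv ℝ f) := hρ.continuous_fderiv one_ne_zero
  set p1 : ℝ → ℝ → ℝ := fun s x => fderiv ℝ f (s, x) (1, 0) with hp1def
  set p2 : ℝ → ℝ → ℝ := fun s x => fderiv ℝ f (s, x) (0, 1) with hp2def
  have hp1c : Continuous fun q : ℝ × ℝ => p1 q.1 q.2 := hcfd.clm_apply continuous_const
  have hp2c : Continuous fun q : ℝ × ℝ => p2 q.1 q.2 := hcfd.clm_apply continuous_const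
  have hρt : ∀ s x, HasDerivAt (fun u => ρ u x) (p1 s x) s := by
    intro s x
    have h1 : HasDerivAt (fun u : ℝ => (u, x)) ((1:ℝ), (0:ℝ)) s :=
      (hasDerivAt_id s).prodMk (hasDerivAt_const s x)
    exact (hfd (s, x)).comp_hasDerivAt s h1
  have hρx : ∀ s x, HasDerivAt (fun y => ρ s y) (p2 s x) x := by
    intro s x
    have h1 : HasDerivAt (fun y : ℝ => (s, y)) ((0:ℝ), (1:ℝ)) x :=
      (hasDerivAt_const x s).prodMk (hasDerivAt_id x)
    exact (hfd (s, x)).comp_hasDerivAt x h1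
  have hpde' : ∀ x ∈ Set.Icc (0:ℝ) 1, p1 t x = -p2 t x := by
    intro x hx
    have h := hpde t ht x hx
    rw [(hρt t x).deriv, (hρx t x).deriv] at h
    linarith
  -- derivative of W
  have hWd : HasDerivAt W (∫ x in (0:ℝ)..1, p1 t x) t :=
    my_hasDerivAt_int ρ p1 hfc hp1c hρt t
  -- derivative of the weighted integral
  have hId : HasDerivAt (fun s => ∫ x in (0:ℝ)..1, Real.exp (-β * x) * ρ s x ^ 2)
      (∫ x in (0:ℝ)..1, Real.exp (-β * x) * (2 * ρ t x * p1 t x)) t := by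
    refine my_hasDerivAt_int (fun s x => Real.exp (-β * x) * ρ s x ^ 2)
      (fun s x => Real.exp (-β * x) * (2 * ρ s x * p1 s x)) ?_ ?_ ?_ t
    · exact (Real.continuous_exp.comp (continuous_const.mul continuous_snd)).mul (hfc.pow 2)
    · exact (Real.continuous_exp.comp (continuous_const.mul continuous_snd)).mul
        ((continuous_const.mul hfc).mul hp1c)
    · intro s x
      have h := ((hρt s x).pow 2).const_mul (Real.exp (-β * x))
      simpa [pow_one, mul_comm, mul_assoc, mul_left_comm] using h
  -- FTC for p2
  have hp2ct : Continuous fun x => p2 t x := hp2c.comp (Continuous.prodMk_right t)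
  have eW : ∫ x in (0:ℝ)..1, p1 t x = ρ t 0 - ρ t 1 := by
    rw [intervalIntegral.integral_congr (g := fun x => -p2 t x)
      (fun x hx => hpde' x (by simpa [Set.uIcc_of_le (by norm_num : (0:ℝ) ≤ 1)] using hx))]
    rw [intervalIntegral.integral_neg,
      intervalIntegral.integral_eq_sub_of_hasDerivAt (fun x _ => hρx t x)
        (hp2ct.intervalIntegrable 0 1)]
    ring
  -- integration by parts
  have eI : ∫ x in (0:ℝ)..1, Real.exp (-β * x) * (2 * ρ t x * p1 t x)
      = ρ t 0 ^ 2 - Real.exp (-β) * ρ t 1 ^ 2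
        - β * ∫ x in (0:ℝ)..1, Real.exp (-β * x) * ρ t x ^ 2 := by
    have hv' : ∀ x ∈ Set.uIcc (0:ℝ) 1, HasDerivAt (fun y => ρ t y ^ 2) (2 * ρ t x * p2 t x) x := by
      intro x _; simpa [pow_one] using (hρx t x).fun_pow 2
    have hu' : ∀ x ∈ Set.uIcc (0:ℝ) 1,
        HasDerivAt (fun y => Real.exp (-β * y)) (-β * Real.exp (-β * x)) x := by
      intro x _
      have := (Real.hasDerivAt_exp (-β * x)).comp x ((hasDerivAt_id x).const_mul (-β))
      simpa [Function.comp_def, mul_comm] using this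
    have hρct : Continuous fun x => ρ t x := hfc.comp (Continuous.prodMk_right t)
    have hIBP := intervalIntegral.integral_mul_deriv_eq_deriv_mul hu' hv'
      ((continuous_const.mul (Real.continuous_exp.comp
        (continuous_const.mul continuous_id))).intervalIntegrable 0 1)
      (((continuous_const.mul hρct).mul hp2ct).intervalIntegrable 0 1)
    have h4 : ∫ x in (0:ℝ)..1, -β * Real.exp (-β * x) * ρ t x ^ 2
        = -β * ∫ x in (0:ℝ)..1, Real.exp (-β * x) * ρ t x ^ 2 := by
      rw [← intervalIntegral.integral_const_mul]
      exact intervalIntegral.integral_congr (fun x _ => by ring)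
    rw [intervalIntegral.integral_congr
      (g := fun x => -(Real.exp (-β * x) * (2 * ρ t x * p2 t x)))
      (fun x hx => by
        rw [hpde' x (by simpa [Set.uIcc_of_le (by norm_num : (0:ℝ) ≤ 1)] using hx)]; ring),
      intervalIntegral.integral_neg, hIBP, h4]
    norm_num [Real.exp_zero]
    ring
  refine ⟨(∫ x in (0:ℝ)..1, Real.exp (-β * x) * (2 * ρ t x * p1 t x))
      + a * (2 * W t * (ρ t 0 - ρ t 1)), ?_, ?_⟩
  · have h2 : HasDerivAt (fun s => a * W s ^ 2) (a * (2 * W t * (ρ t 0 - ρ t 1))) t := by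
      have := ((hWd.pow 2).const_mul a)
      rw [eW] at this
      simpa [pow_one] using this
    exact hId.add h2
  · rw [eI]
    set I := ∫ x in (0:ℝ)..1, Real.exp (-β * x) * ρ t x ^ 2 with hIdef
    have hI0 : 0 ≤ I := intervalIntegral.integral_nonneg (by norm_num)
      (fun x _ => mul_nonneg (Real.exp_pos _).le (sq_nonneg _))
    have hCS : (W t) ^ 2 ≤ ((Real.exp β - 1)/β) * I :=
      cs_aux β hβ (ρ t) (hfc.comp (Continuous.prodMk_right t))
    set u := ρ t 1 with hu
    set w := W t with hw
    have hbc2 : ρ t 0 = k * u + (k - 1) * d * w := hbc t ht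
    have hk1 : (0:ℝ) < 1 - k := by cases' abs_lt.mp hk with h1 h2; linarith
    have ha : a * (1 - k) = d * (Real.exp (-β) - k) := by
      show (d * (Real.exp (-β) - k) / (1 - k)) * (1 - k) = d * (Real.exp (-β) - k)
      field_simp
    have hE1 : Real.exp (-β) < 1 := by
      rw [Real.exp_lt_one_iff]; linarith
    have hEE : Real.exp (-β) * Real.exp β = 1 := by rw [← Real.exp_add]; simp
    have hEb : 1 < Real.exp β := by have := Real.add_one_le_exp β; linarith
    have hid : ρ t 0 ^ 2 - Real.exp (-β) * u ^ 2 - β * I + a * (2 * w * (ρ t 0 - u))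
        = -β * I + (k ^ 2 - Real.exp (-β)) * (u + d * w) ^ 2
          + d ^ 2 * (1 - Real.exp (-β)) * w ^ 2 := by
      rw [hbc2]
      linear_combination (-2 * w * (u + d * w)) * ha
    rw [hid]
    have h1 : (k ^ 2 - Real.exp (-β)) * (u + d * w) ^ 2 ≤ 0 :=
      mul_nonpos_of_nonpos_of_nonneg (by linarith) (sq_nonneg _)
    have h2 : d ^ 2 * (1 - Real.exp (-β)) * w ^ 2
        ≤ d ^ 2 * (1 - Real.exp (-β)) * (((Real.exp β - 1)/β) * I) :=
      mul_le_mul_of_nonneg_left hCS (mul_nonneg (sq_nonneg d) (by linarith))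
    have h3 : d ^ 2 * (1 - Real.exp (-β)) * (((Real.exp β - 1)/β) * I)
        = β * (d ^ 2 * (Real.exp β - 1) ^ 2 * Real.exp (-β) * β⁻¹ ^ 2) * I := by
      have h1k : (1:ℝ) - Real.exp (-β) = Real.exp (-β) * (Real.exp β - 1) := by
        linear_combination -hEE
      rw [h1k]; field_simp
    nlinarith [h1, h2, h3]
end

section
/- Let |k| < 1 and d ∈ ℝ. For any C¹ solution ρ of ρ_t + ρ_x = 0 with boundary condition ρ(t,0) = kρ(t,1) + (k-1)dW(t), where W(t) = ∫₀¹ρ(t,x)dx, the function V₁(t) := ∫₀¹ ρ²(t,x) dx + d·W(t)² satisfies V̇₁(t) = (k² - 1)(ρ(t,1) + dW(t))² ≤ 0 for all t ≥ 0. -/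
open intervalIntegral

private lemma aux_param (g g' : ℝ → ℝ → ℝ)
    (hc : Continuous fun p : ℝ × ℝ => g p.1 p.2)
    (hc' : Continuous fun p : ℝ × ℝ => g' p.1 p.2)
    (hd : ∀ s x : ℝ, HasDerivAt (fun u => g u x) (g' s x) s) (t₀ : ℝ) :
    HasDerivAt (fun t => ∫ x in (0:ℝ)..1, g t x) (∫ x in (0:ℝ)..1, g' t₀ x) t₀ := by
  -- bound on compact set
  have hK : IsCompact ((Set.Icc (t₀ - 1) (t₀ + 1)) ×ˢ (Set.Icc (0:ℝ) 1)) :=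
    (isCompact_Icc).prod isCompact_Icc
  obtain ⟨M, hM⟩ := hK.exists_bound_of_continuousOn
    ((hc'.comp (continuous_fst.prodMk continuous_snd)).continuousOn)
  have main := intervalIntegral.hasDerivAt_integral_of_dominated_loc_of_deriv_le
    (μ := MeasureTheory.volume) (F := g) (F' := g') (x₀ := t₀) (a := (0:ℝ)) (b := 1)
    (bound := fun _ => M) (s := Metric.ball t₀ 1) (Metric.ball_mem_nhds t₀ one_pos)
    (Filter.Eventually.of_forall fun s =>
      ((hc.comp (continuous_const.prodMk continuous_id)).aestronglyMeasurable))
    ((hc.comp (continuous_const.prodMk continuous_id)).intervalIntegrable 0 1)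
    ((hc'.comp (continuous_const.prodMk continuous_id)).aestronglyMeasurable)
    (Filter.Eventually.of_forall fun x hx s hs => by
      have hx' : x ∈ Set.Icc (0:ℝ) 1 := by
        rw [Set.uIoc_of_le zero_le_one] at hx
        exact ⟨le_of_lt hx.1, hx.2⟩
      have hs' : s ∈ Set.Icc (t₀ - 1) (t₀ + 1) := by
        rw [Metric.mem_ball, Real.dist_eq, abs_lt] at hs
        constructor <;> linarith [hs.1, hs.2]
      exact hM (s, x) ⟨hs', hx'⟩)
    (intervalIntegrable_const)
    (Filter.Eventually.of_forall fun x _ s _ => hd s x)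
  exact main.2

theorem stmt_12 (k d : ℝ) (hk : |k| < 1) (ρ : ℝ → ℝ → ℝ)
    (hρ : ContDiff ℝ 1 (fun p : ℝ × ℝ => ρ p.1 p.2))
    (hpde : ∀ t ≥ (0:ℝ), ∀ x ∈ Set.Icc (0:ℝ) 1,
      deriv (fun s => ρ s x) t + deriv (fun y => ρ t y) x = 0)
    (hbc : ∀ t ≥ (0:ℝ),
      ρ t 0 = k * ρ t 1 + (k - 1) * d * ∫ x in (0:ℝ)..1, ρ t x) :
    let W := fun t => ∫ x in (0:ℝ)..1, ρ t x
    let V₁ := fun t => (∫ x in (0:ℝ)..1, ρ t x ^ 2) + d * W t ^ 2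
    ∀ t ≥ (0:ℝ),
      HasDerivAt V₁ ((k ^ 2 - 1) * (ρ t 1 + d * W t) ^ 2) t ∧
      (k ^ 2 - 1) * (ρ t 1 + d * W t) ^ 2 ≤ 0 := by
  intro W V₁ t ht
  set G : ℝ × ℝ → ℝ := fun p => ρ p.1 p.2 with hG
  have hGc : Continuous G := hρ.continuous
  have hGd : Differentiable ℝ G := hρ.differentiable one_ne_zero
  have hfc : Continuous fun p : ℝ × ℝ => fderiv ℝ G p :=
    hρ.continuous_fderiv one_ne_zero
  -- partial derivatives
  set dt : ℝ → ℝ → ℝ := fun s x => fderiv ℝ G (s, x) (1, 0) with hdt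
  set dx : ℝ → ℝ → ℝ := fun s x => fderiv ℝ G (s, x) (0, 1) with hdx
  have hdtc : Continuous fun p : ℝ × ℝ => dt p.1 p.2 := by
    simpa using hfc.clm_apply (continuous_const (y := ((1:ℝ), (0:ℝ))))
  have hdxc : Continuous fun p : ℝ × ℝ => dx p.1 p.2 := by
    simpa using hfc.clm_apply (continuous_const (y := ((0:ℝ), (1:ℝ))))
  have hdt_has : ∀ s x : ℝ, HasDerivAt (fun u => ρ u x) (dt s x) s := by
    intro s x
    have h1 : HasDerivAt (fun u : ℝ => (u, x)) ((1:ℝ), (0:ℝ)) s := by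
      simpa using (hasDerivAt_id s).prodMk (hasDerivAt_const s x)
    exact ((hGd (s, x)).hasFDerivAt.comp_hasDerivAt s h1)
  have hdx_has : ∀ s x : ℝ, HasDerivAt (fun y => ρ s y) (dx s x) x := by
    intro s x
    have h1 : HasDerivAt (fun y : ℝ => (s, y)) ((0:ℝ), (1:ℝ)) x := by
      simpa using (hasDerivAt_const x s).prodMk (hasDerivAt_id x)
    exact ((hGd (s, x)).hasFDerivAt.comp_hasDerivAt x h1)
  -- pde in terms of dt, dx
  have hpde' : ∀ x ∈ Set.Icc (0:ℝ) 1, dt t x = -dx t x := by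
    intro x hx
    have := hpde t ht x hx
    rw [(hdt_has t x).deriv] at this
    rw [(hdx_has t x).deriv] at this
    linarith
  -- derivative of W
  have hW : HasDerivAt W (∫ x in (0:ℝ)..1, dt t x) t :=
    aux_param ρ dt hGc hdtc hdt_has t
  -- derivative of the square integral
  have hsq : HasDerivAt (fun s => ∫ x in (0:ℝ)..1, ρ s x ^ 2)
      (∫ x in (0:ℝ)..1, 2 * ρ t x * dt t x) t := by
    have := aux_param (fun s x => ρ s x ^ 2) (fun s x => 2 * ρ s x * dt s x)
      (hGc.pow 2) ((continuous_const.mul hGc).mul hdtc)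
      (fun s x => by
        have := (hdt_has s x).fun_pow 2
        simpa [mul_comm, mul_assoc, mul_left_comm] using this) t
    simpa using this
  -- FTC computations
  have hIdx : IntervalIntegrable (fun x => dx t x) MeasureTheory.volume 0 1 :=
    ((hdxc.comp (continuous_const.prodMk continuous_id)).intervalIntegrable 0 1)
  have hFTC1 : (∫ x in (0:ℝ)..1, dx t x) = ρ t 1 - ρ t 0 :=
    intervalIntegral.integral_eq_sub_of_hasDerivAt
      (fun x _ => hdx_has t x) hIdx
  have hFTC2 : (∫ x in (0:ℝ)..1, 2 * ρ t x * dx t x) = ρ t 1 ^ 2 - ρ t 0 ^ 2 := by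
    have := intervalIntegral.integral_eq_sub_of_hasDerivAt
      (f := fun y => ρ t y ^ 2) (f' := fun x => 2 * ρ t x * dx t x) (a := 0) (b := 1)
      (fun x _ => by
        have := (hdx_has t x).fun_pow 2
        simpa [mul_comm, mul_assoc, mul_left_comm] using this)
      (((continuous_const.mul (hGc.comp (continuous_const.prodMk continuous_id))).mul
        (hdxc.comp (continuous_const.prodMk continuous_id))).intervalIntegrable 0 1)
    simpa using this
  have huIcc : Set.uIcc (0:ℝ) 1 = Set.Icc 0 1 := Set.uIcc_of_le zero_le_one
  have hWval : (∫ x in (0:ℝ)..1, dt t x) = ρ t 0 - ρ t 1 := by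
    rw [intervalIntegral.integral_congr (g := fun x => -dx t x)
      (by intro x hx; exact hpde' x (huIcc ▸ hx))]
    rw [intervalIntegral.integral_neg, hFTC1]; ring
  have hsqval : (∫ x in (0:ℝ)..1, 2 * ρ t x * dt t x) = ρ t 0 ^ 2 - ρ t 1 ^ 2 := by
    rw [intervalIntegral.integral_congr (g := fun x => -(2 * ρ t x * dx t x))
      (by
        intro x hx
        show 2 * ρ t x * dt t x = -(2 * ρ t x * dx t x)
        rw [hpde' x (huIcc ▸ hx)]; ring)]
    rw [intervalIntegral.integral_neg, hFTC2]; ring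
  rw [hWval] at hW
  rw [hsqval] at hsq
  have hV : HasDerivAt V₁
      ((ρ t 0 ^ 2 - ρ t 1 ^ 2) + d * (2 * W t * (ρ t 0 - ρ t 1))) t := by
    have := hsq.fun_add (((hW.fun_pow 2).const_mul d))
    simpa [V₁, mul_comm, mul_assoc, mul_left_comm] using this
  have key : (ρ t 0 ^ 2 - ρ t 1 ^ 2) + d * (2 * W t * (ρ t 0 - ρ t 1))
      = (k ^ 2 - 1) * (ρ t 1 + d * W t) ^ 2 := by
    have e0 := hbc t ht
    rw [show (∫ x in (0:ℝ)..1, ρ t x) = W t from rfl] at e0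
    rw [e0]; ring
  rw [key] at hV
  refine ⟨hV, ?_⟩
  obtain ⟨h1, h2⟩ := abs_lt.mp hk
  have hk2 : k ^ 2 - 1 ≤ 0 := by nlinarith
  nlinarith [sq_nonneg (ρ t 1 + d * W t), mul_nonneg (neg_nonneg.mpr hk2) (sq_nonneg (ρ t 1 + d * W t))]
end

section
/- Let d ≥ 1 and |k| < 1, and let ρ be a C¹ solution of ρ_t + ρ_x = 0 with ρ(t,0) = kρ(t,1)+(k-1)dW(t), W(t)=∫₀¹ρ(t,x)dx. Set ξ(t,x) := ρ(t,x) + dW(t) and V₂(t) := ∫₀¹ e^(-x) ξ²(t,x) dx. Then V̇₂(t) = (k² - e^(-1))ξ²(t,1) - V₂(t) + 2d(k-1)ξ(t,1)∫₀¹ e^(-x)ξ(t,x) dx, and there exists a constant A > 0 depending only on d and k such that V̇₂(t) ≤ -½V₂(t) + A·ξ²(t,1) for all t ≥ 0. -/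
open intervalIntegral

private lemma deriv_under (G Gt : ℝ → ℝ → ℝ) (t₀ C : ℝ)
    (hG : ∀ t, Continuous (G t))
    (hGt0 : Continuous (Gt t₀))
    (hbound : ∀ x ∈ Set.uIoc (0:ℝ) 1, ∀ t ∈ Metric.ball t₀ 1, |Gt t x| ≤ C)
    (hdd : ∀ t x, HasDerivAt (fun s => G s x) (Gt t x) t) :
    HasDerivAt (fun t => ∫ x in (0:ℝ)..1, G t x) (∫ x in (0:ℝ)..1, Gt t₀ x) t₀ := by
  refine (intervalIntegral.hasDerivAt_integral_of_dominated_loc_of_deriv_le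
    (F := G) (F' := Gt) (bound := fun _ => C) (Metric.ball_mem_nhds t₀ one_pos) ?_ ?_ ?_ ?_ ?_ ?_).2
  · exact Filter.Eventually.of_forall fun t => (hG t).aestronglyMeasurable
  · exact (hG t₀).intervalIntegrable _ _
  · exact hGt0.aestronglyMeasurable
  · exact Filter.Eventually.of_forall fun x hx t ht => by
      simpa [Real.norm_eq_abs] using hbound x hx t ht
  · exact intervalIntegrable_const
  · exact Filter.Eventually.of_forall fun x _ t _ => hdd t x

set_option maxHeartbeats 2000000 in
private theorem stmt_15_aux (d k : ℝ) (hd : 1 ≤ d) (hk : |k| < 1) (ρ : ℝ → ℝ → ℝ)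
    (hρ : ContDiff ℝ 1 (fun p : ℝ × ℝ => ρ p.1 p.2))
    (hpde : ∀ t ≥ (0:ℝ), ∀ x ∈ Set.Icc (0:ℝ) 1,
      deriv (fun s => ρ s x) t + deriv (fun y => ρ t y) x = 0)
    (hbc : ∀ t ≥ (0:ℝ),
      ρ t 0 = k * ρ t 1 + (k - 1) * d * ∫ x in (0:ℝ)..1, ρ t x)
    (W : ℝ → ℝ) (hW : W = fun t => ∫ x in (0:ℝ)..1, ρ t x)
    (ξ : ℝ → ℝ → ℝ) (hξ : ξ = fun t x => ρ t x + d * W t)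
    (V₂ : ℝ → ℝ) (hV : V₂ = fun t => ∫ x in (0:ℝ)..1, Real.exp (-x) * ξ t x ^ 2) :
    ∃ A > 0, ∀ t ≥ (0:ℝ), ∃ D : ℝ, HasDerivAt V₂ D t ∧
      D = (k ^ 2 - Real.exp (-1)) * ξ t 1 ^ 2 - V₂ t +
        2 * d * (k - 1) * ξ t 1 * ∫ x in (0:ℝ)..1, Real.exp (-x) * ξ t x ∧
      D ≤ -(1 / 2) * V₂ t + A * ξ t 1 ^ 2 := by
  set F : ℝ × ℝ → ℝ := fun p => ρ p.1 p.2 with hF_def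
  have hFd : ∀ p : ℝ × ℝ, HasFDerivAt F (fderiv ℝ F p) p :=
    fun p => (hρ.differentiable one_ne_zero p).hasFDerivAt
  set ρt : ℝ → ℝ → ℝ := fun t x => fderiv ℝ F (t, x) (1, 0) with hρt_def
  set ρx : ℝ → ℝ → ℝ := fun t x => fderiv ℝ F (t, x) (0, 1) with hρx_def
  have hfdc : Continuous (fderiv ℝ F) := hρ.continuous_fderiv one_ne_zero
  have hρtc : Continuous fun p : ℝ × ℝ => ρt p.1 p.2 := hfdc.clm_apply continuous_const
  have hρxc : Continuous fun p : ℝ × ℝ => ρx p.1 p.2 := hfdc.clm_apply continuous_const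
  have hρc : Continuous F := hρ.continuous
  have hρt' : ∀ t x, HasDerivAt (fun s => ρ s x) (ρt t x) t := fun t x =>
    (hFd (t, x)).comp_hasDerivAt (f := fun s => (s, x)) t ((hasDerivAt_id t).prodMk (hasDerivAt_const t x))
  have hρx' : ∀ t x, HasDerivAt (fun y => ρ t y) (ρx t x) x := fun t x =>
    (hFd (t, x)).comp_hasDerivAt (f := fun y => (t, y)) x ((hasDerivAt_const x t).prodMk (hasDerivAt_id x))
  set It : ℝ → ℝ := fun t => ∫ x in (0:ℝ)..1, ρt t x with hIt_def
  have ball_sub : ∀ t₀ : ℝ, ∀ t ∈ Metric.ball t₀ 1, t ∈ Set.Icc (t₀ - 1) (t₀ + 1) := by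
    intro t₀ t ht
    rw [Metric.mem_ball, Real.dist_eq, abs_lt] at ht
    constructor <;> linarith [ht.1, ht.2]
  have hWd : ∀ t₀, HasDerivAt W (It t₀) t₀ := by
    intro t₀
    obtain ⟨C, hC⟩ := ((isCompact_Icc.prod isCompact_Icc) :
      IsCompact (Set.Icc (t₀ - 1) (t₀ + 1) ×ˢ Set.Icc (0:ℝ) 1)).exists_bound_of_continuousOn
      hρtc.continuousOn
    rw [hW]
    refine deriv_under ρ ρt t₀ C ?_ ?_ ?_ hρt'
    · exact fun t => hρc.comp (continuous_const.prodMk continuous_id)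
    · exact hρtc.comp (continuous_const.prodMk continuous_id)
    · intro x hx t ht
      rw [Set.uIoc_of_le zero_le_one] at hx
      simpa [Real.norm_eq_abs] using hC (t, x) ⟨ball_sub t₀ t ht, ⟨hx.1.le, hx.2⟩⟩
  have hWc : Continuous W := (Differentiable.continuous fun t => (hWd t).differentiableAt)
  have hξc : Continuous fun p : ℝ × ℝ => ξ p.1 p.2 := by
    rw [hξ]; exact hρc.add (continuous_const.mul (hWc.comp continuous_fst))
  have hξd : ∀ t x, HasDerivAt (fun s => ξ s x) (ρt t x + d * It t) t := by
    intro t x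
    rw [hξ]
    exact (hρt' t x).add ((hWd t).const_mul d)
  -- derivative of V₂
  set Gt : ℝ → ℝ → ℝ := fun s x => Real.exp (-x) * (2 * ξ s x * (ρt s x + d * It s))
    with hGt_def
  have hVd : ∀ t₀, HasDerivAt V₂ (∫ x in (0:ℝ)..1, Gt t₀ x) t₀ := by
    intro t₀
    have hK : IsCompact (Set.Icc (t₀ - 1) (t₀ + 1) ×ˢ Set.Icc (0:ℝ) 1) :=
      isCompact_Icc.prod isCompact_Icc
    obtain ⟨C₁, hC₁⟩ := hK.exists_bound_of_continuousOn hρtc.continuousOn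
    obtain ⟨C₂, hC₂⟩ := hK.exists_bound_of_continuousOn hξc.continuousOn
    have hmemK : (t₀, (0:ℝ)) ∈ Set.Icc (t₀ - 1) (t₀ + 1) ×ˢ Set.Icc (0:ℝ) 1 :=
      ⟨⟨by linarith, by linarith⟩, ⟨le_refl 0, zero_le_one⟩⟩
    have hC₁0 : 0 ≤ C₁ := le_trans (norm_nonneg _) (hC₁ _ hmemK)
    have hC₂0 : 0 ≤ C₂ := le_trans (norm_nonneg _) (hC₂ _ hmemK)
    have hItb : ∀ t ∈ Metric.ball t₀ 1, |It t| ≤ C₁ := by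
      intro t ht
      have : ‖∫ x in (0:ℝ)..1, ρt t x‖ ≤ C₁ * |1 - 0| := by
        refine intervalIntegral.norm_integral_le_of_norm_le_const ?_
        intro x hx
        rw [Set.uIoc_of_le zero_le_one] at hx
        exact hC₁ (t, x) ⟨ball_sub t₀ t ht, ⟨hx.1.le, hx.2⟩⟩
      simpa [Real.norm_eq_abs] using this
    rw [hV]
    refine deriv_under (fun s x => Real.exp (-x) * ξ s x ^ 2) Gt t₀
      (2 * C₂ * (C₁ + |d| * C₁)) ?_ ?_ ?_ ?_
    · intro t
      exact (Real.continuous_exp.comp continuous_neg).mul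
        ((hξc.comp (continuous_const.prodMk continuous_id)).pow 2)
    · exact (Real.continuous_exp.comp continuous_neg).mul
        ((continuous_const.mul (hξc.comp (continuous_const.prodMk continuous_id))).mul
          ((hρtc.comp (continuous_const.prodMk continuous_id)).add continuous_const))
    · intro x hx t ht
      rw [Set.uIoc_of_le zero_le_one] at hx
      have hxI : x ∈ Set.Icc (0:ℝ) 1 := ⟨hx.1.le, hx.2⟩
      have h1 : |ρt t x| ≤ C₁ := by
        simpa [Real.norm_eq_abs] using hC₁ (t, x) ⟨ball_sub t₀ t ht, hxI⟩
      have h2 : |It t| ≤ C₁ := hItb t ht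
      have h3 : |ξ t x| ≤ C₂ := by
        simpa [Real.norm_eq_abs] using hC₂ (t, x) ⟨ball_sub t₀ t ht, hxI⟩
      have h4 : Real.exp (-x) ≤ 1 := Real.exp_le_one_iff.2 (by linarith [hx.1])
      have h5 : |ρt t x + d * It t| ≤ C₁ + |d| * C₁ :=
        (abs_add_le _ _).trans (add_le_add h1 (by
          rw [abs_mul]; exact mul_le_mul_of_nonneg_left h2 (abs_nonneg d)))
      have h6 : |2 * ξ t x * (ρt t x + d * It t)| ≤ 2 * C₂ * (C₁ + |d| * C₁) := by
        rw [abs_mul, abs_mul, abs_two]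
        exact mul_le_mul (mul_le_mul_of_nonneg_left h3 (by norm_num)) h5 (abs_nonneg _)
          (by positivity)
      calc |Gt t x| = Real.exp (-x) * |2 * ξ t x * (ρt t x + d * It t)| := by
            rw [hGt_def, abs_mul, abs_of_pos (Real.exp_pos _)]
        _ ≤ 1 * (2 * C₂ * (C₁ + |d| * C₁)) :=
            mul_le_mul h4 h6 (abs_nonneg _) zero_le_one
        _ = 2 * C₂ * (C₁ + |d| * C₁) := one_mul _
    · intro t x
      have h := ((hξd t x).fun_pow 2).const_mul (Real.exp (-x))
      refine h.congr_deriv ?_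
      rw [hGt_def]
      push_cast
      ring
  -- now the main statement
  refine ⟨k ^ 2 + 2 * d ^ 2 * (k - 1) ^ 2 + 1, by positivity, ?_⟩
  intro t ht
  refine ⟨∫ x in (0:ℝ)..1, Gt t x, hVd t, ?_⟩
  -- pointwise PDE at time t
  have hpde' : ∀ x ∈ Set.Icc (0:ℝ) 1, ρt t x = -ρx t x := by
    intro x hx
    have h := hpde t ht x hx
    rw [(hρt' t x).deriv, (hρx' t x).deriv] at h
    linarith
  have hbc' : ρ t 0 = k * ρ t 1 + (k - 1) * d * W t := by
    rw [hW]; exact hbc t ht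
  -- value of It t
  have hIt : It t = (k - 1) * ξ t 1 := by
    have e1 : ∫ x in (0:ℝ)..1, ρx t x = ρ t 1 - ρ t 0 := by
      refine intervalIntegral.integral_eq_sub_of_hasDerivAt (fun x _ => hρx' t x) ?_
      exact (hρxc.comp (continuous_const.prodMk continuous_id)).intervalIntegrable _ _
    have e2 : It t = ∫ x in (0:ℝ)..1, -ρx t x := by
      refine intervalIntegral.integral_congr fun x hx => ?_
      rw [Set.uIcc_of_le zero_le_one] at hx
      exact hpde' x hx
    rw [e2, intervalIntegral.integral_neg, e1, hξ]
    rw [hbc']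
    ring
  have hξ0 : ξ t 0 = k * ξ t 1 := by rw [hξ]; simp only; rw [hbc']; ring
  -- integration by parts
  have hcξt : Continuous (fun x => ξ t x) := hξc.comp (continuous_const.prodMk continuous_id)
  have hcρxt : Continuous (fun x => ρx t x) := hρxc.comp (continuous_const.prodMk continuous_id)
  have hcexp : Continuous (fun x : ℝ => Real.exp (-x)) := Real.continuous_exp.comp continuous_neg
  have hu : ∀ x ∈ Set.uIcc (0:ℝ) 1,
      HasDerivAt (fun y => Real.exp (-y)) (-Real.exp (-x)) x := by
    intro x _
    have h := (hasDerivAt_neg x).exp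
    convert h using 1
    ring
  have hv : ∀ x ∈ Set.uIcc (0:ℝ) 1,
      HasDerivAt (fun y => ξ t y ^ 2) (2 * ξ t x * ρx t x) x := by
    intro x _
    have hξx : HasDerivAt (fun y => ξ t y) (ρx t x) x := by
      rw [hξ]; exact (hρx' t x).add_const _
    have h := hξx.fun_pow 2
    refine h.congr_deriv ?_
    push_cast
    ring
  have hfd : ∀ x ∈ Set.uIcc (0:ℝ) 1,
      HasDerivAt (fun y => Real.exp (-y) * ξ t y ^ 2)
        (-Real.exp (-x) * ξ t x ^ 2 + Real.exp (-x) * (2 * ξ t x * ρx t x)) x := by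
    intro x hx
    exact (hu x hx).mul (hv x hx)
  have ftc := intervalIntegral.integral_eq_sub_of_hasDerivAt hfd
    (((hcexp.neg.mul (hcξt.pow 2)).add
      (hcexp.mul ((continuous_const.mul hcξt).mul hcρxt))).intervalIntegrable _ _)
  have hJ : (∫ x in (0:ℝ)..1, -Real.exp (-x) * ξ t x ^ 2) = -V₂ t := by
    rw [hV, ← intervalIntegral.integral_neg]
    exact intervalIntegral.integral_congr fun x _ => by ring
  have hI2 : (∫ x in (0:ℝ)..1, Real.exp (-x) * (2 * ξ t x * ρx t x))
      = Real.exp (-1) * ξ t 1 ^ 2 - k ^ 2 * ξ t 1 ^ 2 + V₂ t := by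
    rw [intervalIntegral.integral_add
        ((hcexp.fun_neg.fun_mul (hcξt.fun_pow 2)).intervalIntegrable _ _)
        ((hcexp.fun_mul ((continuous_const.fun_mul hcξt).fun_mul hcρxt)).intervalIntegrable _ _),
      hJ] at ftc
    simp only [neg_zero, Real.exp_zero, one_mul] at ftc
    rw [hξ0] at ftc
    linear_combination ftc
  -- split the derivative integral
  have hint1 : IntervalIntegrable (fun x => Real.exp (-x) * (2 * ξ t x * ρx t x))
      MeasureTheory.volume 0 1 :=
    (hcexp.mul ((continuous_const.mul hcξt).mul hcρxt)).intervalIntegrable _ _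
  have hint2 : IntervalIntegrable
      (fun x => (2 * d * (k - 1) * ξ t 1) * (Real.exp (-x) * ξ t x))
      MeasureTheory.volume 0 1 :=
    (continuous_const.mul (hcexp.mul hcξt)).intervalIntegrable _ _
  have hsplit : (∫ x in (0:ℝ)..1, Gt t x)
      = -(∫ x in (0:ℝ)..1, Real.exp (-x) * (2 * ξ t x * ρx t x))
        + 2 * d * (k - 1) * ξ t 1 * ∫ x in (0:ℝ)..1, Real.exp (-x) * ξ t x := by
    have : (∫ x in (0:ℝ)..1, Gt t x)
        = ∫ x in (0:ℝ)..1, (-(Real.exp (-x) * (2 * ξ t x * ρx t x))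
            + (2 * d * (k - 1) * ξ t 1) * (Real.exp (-x) * ξ t x)) := by
      refine intervalIntegral.integral_congr fun x hx => ?_
      rw [Set.uIcc_of_le zero_le_one] at hx
      rw [hGt_def]
      simp only
      rw [hpde' x hx, hIt]
      ring
    have hint1' : IntervalIntegrable
        (fun x => -(Real.exp (-x) * (2 * ξ t x * ρx t x))) MeasureTheory.volume 0 1 :=
      hint1.neg
    rw [this, intervalIntegral.integral_add hint1' hint2,
      intervalIntegral.integral_neg, intervalIntegral.integral_const_mul]
  have hDeq : (∫ x in (0:ℝ)..1, Gt t x)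
      = (k ^ 2 - Real.exp (-1)) * ξ t 1 ^ 2 - V₂ t +
        2 * d * (k - 1) * ξ t 1 * ∫ x in (0:ℝ)..1, Real.exp (-x) * ξ t x := by
    rw [hsplit, hI2]; ring
  refine ⟨hDeq, ?_⟩
  rw [hDeq]
  -- the estimate
  set c : ℝ := d * (k - 1) * ξ t 1 with hc_def
  have hpoint : ∀ x ∈ Set.Icc (0:ℝ) 1,
      (2 * c) * (Real.exp (-x) * ξ t x)
        ≤ (1 / 2) * (Real.exp (-x) * ξ t x ^ 2) + 2 * c ^ 2 * Real.exp (-x) := by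
    intro x _
    nlinarith [mul_nonneg (Real.exp_pos (-x)).le (sq_nonneg (ξ t x - 2 * c)),
      Real.exp_pos (-x)]
  have hexpint : (∫ x in (0:ℝ)..1, Real.exp (-x)) = 1 - Real.exp (-1) := by
    have h : ∀ x ∈ Set.uIcc (0:ℝ) 1,
        HasDerivAt (fun y => -Real.exp (-y)) (Real.exp (-x)) x := by
      intro x _
      have := ((hasDerivAt_neg x).exp).fun_neg
      refine this.congr_deriv ?_
      ring
    rw [intervalIntegral.integral_eq_sub_of_hasDerivAt h (hcexp.intervalIntegrable _ _)]
    simp only [neg_zero, Real.exp_zero, neg_neg]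
    ring
  have hmono : (2 * c) * (∫ x in (0:ℝ)..1, Real.exp (-x) * ξ t x)
      ≤ (1 / 2) * V₂ t + 2 * c ^ 2 * (1 - Real.exp (-1)) := by
    have h1 : (2 * c) * (∫ x in (0:ℝ)..1, Real.exp (-x) * ξ t x)
        = ∫ x in (0:ℝ)..1, (2 * c) * (Real.exp (-x) * ξ t x) := by
      rw [intervalIntegral.integral_const_mul]
    have h2 : (∫ x in (0:ℝ)..1, ((1 / 2) * (Real.exp (-x) * ξ t x ^ 2)
          + 2 * c ^ 2 * Real.exp (-x)))
        = (1 / 2) * V₂ t + 2 * c ^ 2 * (1 - Real.exp (-1)) := by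
      rw [intervalIntegral.integral_add
        ((continuous_const.fun_mul (hcexp.fun_mul (hcξt.fun_pow 2))).intervalIntegrable _ _)
        ((continuous_const.fun_mul hcexp).intervalIntegrable _ _),
        intervalIntegral.integral_const_mul, intervalIntegral.integral_const_mul,
        hexpint, hV]
    rw [h1, ← h2]
    refine intervalIntegral.integral_mono_on zero_le_one
      ((continuous_const.mul (hcexp.mul hcξt)).intervalIntegrable _ _)
      (((continuous_const.mul (hcexp.mul (hcξt.pow 2))).add
        (continuous_const.mul hcexp)).intervalIntegrable _ _) hpoint
  have hterm : 2 * d * (k - 1) * ξ t 1 * (∫ x in (0:ℝ)..1, Real.exp (-x) * ξ t x)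
      = (2 * c) * (∫ x in (0:ℝ)..1, Real.exp (-x) * ξ t x) := by rw [hc_def]; ring
  have hc2 : c ^ 2 = d ^ 2 * (k - 1) ^ 2 * ξ t 1 ^ 2 := by rw [hc_def]; ring
  have he1 : 0 < Real.exp (-1) := Real.exp_pos _
  have he2 : 0 ≤ c ^ 2 * Real.exp (-1) := mul_nonneg (sq_nonneg _) he1.le
  have he3 : 0 ≤ Real.exp (-1) * ξ t 1 ^ 2 := mul_nonneg he1.le (sq_nonneg _)
  have he4 : 0 ≤ ξ t 1 ^ 2 := sq_nonneg _
  nlinarith [hmono, hterm, hc2]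

theorem stmt_15 (d k : ℝ) (hd : 1 ≤ d) (hk : |k| < 1) (ρ : ℝ → ℝ → ℝ)
    (hρ : ContDiff ℝ 1 (fun p : ℝ × ℝ => ρ p.1 p.2))
    (hpde : ∀ t ≥ (0:ℝ), ∀ x ∈ Set.Icc (0:ℝ) 1,
      deriv (fun s => ρ s x) t + deriv (fun y => ρ t y) x = 0)
    (hbc : ∀ t ≥ (0:ℝ),
      ρ t 0 = k * ρ t 1 + (k - 1) * d * ∫ x in (0:ℝ)..1, ρ t x) :
    let W := fun t => ∫ x in (0:ℝ)..1, ρ t x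
    let ξ := fun t x => ρ t x + d * W t
    let V₂ := fun t => ∫ x in (0:ℝ)..1, Real.exp (-x) * ξ t x ^ 2
    ∃ A > 0, ∀ t ≥ (0:ℝ), ∃ D : ℝ, HasDerivAt V₂ D t ∧
      D = (k ^ 2 - Real.exp (-1)) * ξ t 1 ^ 2 - V₂ t +
        2 * d * (k - 1) * ξ t 1 * ∫ x in (0:ℝ)..1, Real.exp (-x) * ξ t x ∧
      D ≤ -(1 / 2) * V₂ t + A * ξ t 1 ^ 2 := by
  intro W ξ V₂
  exact stmt_15_aux d k hd hk ρ hρ hpde hbc W rfl ξ rfl V₂ rfl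
end

section
/- Let λ : ℝ → (0,∞) be continuous, k ∈ (-1,1), and β > 0 with e^(-β) > k². For any C¹ solution ρ of ρ_t + (ρλ(W(t)))_x = 0 on (0,∞)×(0,1) with W(t)=∫₀¹ρ(t,x)dx and boundary feedback ρ(t,0)λ(W(t)) = k·ρ(t,1)λ(W(t)), the Lyapunov function L(t) = ∫₀¹ e^(-βx)ρ²(t,x) dx satisfies L̇(t) = -βλ(W(t))L(t) + λ(W(t))(ρ²(t,0) - e^(-β)ρ²(t,1)) ≤ -βλ(W(t))L(t) ≤ 0 for all t ≥ 0. -/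
set_option maxHeartbeats 4000000


open intervalIntegral

theorem stmt_17 (lam : ℝ → ℝ) (hlam : Continuous lam) (hlampos : ∀ s, 0 < lam s)
    (k β : ℝ) (hk : k ∈ Set.Ioo (-1:ℝ) 1) (hβ : 0 < β)
    (hβk : k ^ 2 < Real.exp (-β)) (ρ : ℝ → ℝ → ℝ)
    (hρ : ContDiff ℝ 1 (fun p : ℝ × ℝ => ρ p.1 p.2))
    (hpde : ∀ t ≥ (0:ℝ), ∀ x ∈ Set.Icc (0:ℝ) 1,
      deriv (fun s => ρ s x) t +
        lam (∫ y in (0:ℝ)..1, ρ t y) * deriv (fun y => ρ t y) x = 0)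
    (hbc : ∀ t ≥ (0:ℝ), ρ t 0 = k * ρ t 1) :
    let W := fun t => ∫ x in (0:ℝ)..1, ρ t x
    let L := fun t => ∫ x in (0:ℝ)..1, Real.exp (-β * x) * ρ t x ^ 2
    ∀ t ≥ (0:ℝ),
      HasDerivAt L (-β * lam (W t) * L t +
        lam (W t) * (ρ t 0 ^ 2 - Real.exp (-β) * ρ t 1 ^ 2)) t ∧
      -β * lam (W t) * L t +
          lam (W t) * (ρ t 0 ^ 2 - Real.exp (-β) * ρ t 1 ^ 2) ≤
        -β * lam (W t) * L t ∧
      -β * lam (W t) * L t ≤ 0 := by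
  intro W L t₀ ht₀
  set f : ℝ × ℝ → ℝ := fun p => ρ p.1 p.2 with hf_def
  have hfd : Differentiable ℝ f := hρ.differentiable one_ne_zero
  have hfc : Continuous f := hρ.continuous
  set Ft : ℝ → ℝ → ℝ := fun t x => fderiv ℝ f (t, x) (1, 0) with hFt_def
  set Fx : ℝ → ℝ → ℝ := fun t x => fderiv ℝ f (t, x) (0, 1) with hFx_def
  have hFt_cont : Continuous fun p : ℝ × ℝ => Ft p.1 p.2 := by
    have := (hρ.continuous_fderiv one_ne_zero).clm_apply (continuous_const (y := ((1:ℝ),(0:ℝ))))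
    simpa [hFt_def] using this
  have hFx_cont : Continuous fun p : ℝ × ℝ => Fx p.1 p.2 := by
    have := (hρ.continuous_fderiv one_ne_zero).clm_apply (continuous_const (y := ((0:ℝ),(1:ℝ))))
    simpa [hFx_def] using this
  have hdt : ∀ t x : ℝ, HasDerivAt (fun s => ρ s x) (Ft t x) t := fun t x =>
    by have h := ((hfd (t, x)).hasFDerivAt).comp_hasDerivAt t
        ((hasDerivAt_id' t).prodMk (hasDerivAt_const t x)); exact h
  have hdx : ∀ t x : ℝ, HasDerivAt (fun y => ρ t y) (Fx t x) x := fun t x =>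
    ((hfd (t, x)).hasFDerivAt).comp_hasDerivAt x
      ((hasDerivAt_const x t).prodMk (hasDerivAt_id x))
  -- PDE in terms of Ft, Fx
  have hpde' : ∀ x ∈ Set.Icc (0:ℝ) 1, Ft t₀ x = -(lam (W t₀) * Fx t₀ x) := by
    intro x hx
    have h := hpde t₀ ht₀ x hx
    rw [(hdt t₀ x).deriv, (hdx t₀ x).deriv] at h
    linarith
  -- derivative of the integrand in t
  set G : ℝ → ℝ → ℝ := fun t x => Real.exp (-β * x) * (2 * ρ t x ^ 1 * Ft t x) with hG_def
  have hG_cont : Continuous fun p : ℝ × ℝ => G p.1 p.2 := by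
    apply Continuous.mul
    · exact (Real.continuous_exp.comp (continuous_const.mul continuous_snd))
    · exact (continuous_const.mul (hfc.pow 1)).mul hFt_cont
  have hGdiff : ∀ t x : ℝ,
      HasDerivAt (fun s => Real.exp (-β * x) * ρ s x ^ 2) (G t x) t := by
    intro t x
    exact ((hdt t x).pow 2).const_mul _
  have hxc : ∀ t : ℝ, Continuous fun x => ρ t x := fun t =>
    hfc.comp (Continuous.prodMk_right t)
  have hFcont : ∀ t : ℝ, Continuous fun x => Real.exp (-β * x) * ρ t x ^ 2 := fun t =>
    ((Real.continuous_exp.comp (continuous_const.mul continuous_id)).mul ((hxc t).pow 2))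
  have hFtc : ∀ t : ℝ, Continuous fun x => Ft t x := fun t =>
    hFt_cont.comp (Continuous.prodMk_right t)
  have hFxc : ∀ t : ℝ, Continuous fun x => Fx t x := fun t =>
    hFx_cont.comp (Continuous.prodMk_right t)
  have hGtc : ∀ t : ℝ, Continuous fun x => G t x := fun t =>
    (Real.continuous_exp.comp (continuous_const.mul continuous_id)).mul
      ((continuous_const.mul ((hxc t).pow 1)).mul (hFtc t))
  -- bound on a compact neighborhood
  obtain ⟨C, hC⟩ : ∃ C, ∀ p ∈ Set.Icc (t₀ - 1) (t₀ + 1) ×ˢ Set.Icc (0:ℝ) 1,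
      ‖G p.1 p.2‖ ≤ C := by
    rcases (isCompact_Icc.prod isCompact_Icc).exists_bound_of_continuousOn
      hG_cont.continuousOn with ⟨C, hC⟩
    exact ⟨C, hC⟩
  -- differentiate under the integral sign
  have hbound : ∀ x ∈ Set.uIoc (0:ℝ) 1, ∀ t ∈ Metric.ball t₀ 1, ‖G t x‖ ≤ C := by
    intro x hx t ht
    apply hC (t, x)
    constructor
    · have : |t - t₀| < 1 := by simpa [Metric.mem_ball, Real.dist_eq] using ht
      constructor <;> [linarith [abs_lt.mp this |>.1]; linarith [abs_lt.mp this |>.2]]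
    · rw [Set.uIoc_of_le (by norm_num : (0:ℝ) ≤ 1)] at hx
      exact ⟨le_of_lt hx.1, hx.2⟩
  have key := intervalIntegral.hasDerivAt_integral_of_dominated_loc_of_deriv_le
    (F := fun t x => Real.exp (-β * x) * ρ t x ^ 2) (F' := G) (x₀ := t₀)
    (a := 0) (b := 1) (μ := MeasureTheory.volume) (bound := fun _ => C)
    (s := Metric.ball t₀ 1) (Metric.ball_mem_nhds t₀ one_pos)
    (Filter.Eventually.of_forall fun t => (hFcont t).aestronglyMeasurable)
    ((hFcont t₀).intervalIntegrable 0 1)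
    ((hGtc t₀).aestronglyMeasurable)
    (Filter.Eventually.of_forall hbound)
    (intervalIntegrable_const)
    (Filter.Eventually.of_forall fun x _ t _ => hGdiff t x)
  obtain ⟨-, hL'⟩ := key
  -- compute the integral of G t₀
  -- integration by parts helper
  set g : ℝ → ℝ := fun x => Real.exp (-β * x) * ρ t₀ x ^ 2 with hg_def
  have hg' : ∀ x : ℝ, HasDerivAt g
      (-β * Real.exp (-β * x) * ρ t₀ x ^ 2
        + Real.exp (-β * x) * (2 * ρ t₀ x ^ 1 * Fx t₀ x)) x := by
    intro x
    have h1 : HasDerivAt (fun x => Real.exp (-β * x)) (-β * Real.exp (-β * x)) x := by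
      have := ((hasDerivAt_id x).const_mul (-β)).exp
      simpa [mul_comm] using this
    have h2 : HasDerivAt (fun x => ρ t₀ x ^ 2) (2 * ρ t₀ x ^ 1 * Fx t₀ x) x :=
      (hdx t₀ x).pow 2
    exact h1.mul h2
  have hcont_g' : Continuous fun x =>
      -β * Real.exp (-β * x) * ρ t₀ x ^ 2
        + Real.exp (-β * x) * (2 * ρ t₀ x ^ 1 * Fx t₀ x) := by
    have h1 : Continuous fun x : ℝ => ρ t₀ x := hxc t₀
    have h2 : Continuous fun x : ℝ => Fx t₀ x := hFxc t₀
    have h3 : Continuous fun x : ℝ => Real.exp (-β * x) :=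
      Real.continuous_exp.comp (continuous_const.mul continuous_id)
    exact ((continuous_const.mul h3).mul (h1.pow 2)).add
      (h3.mul ((continuous_const.mul (h1.pow 1)).mul h2))
  have hIBP : (∫ x in (0:ℝ)..1,
      (-β * Real.exp (-β * x) * ρ t₀ x ^ 2
        + Real.exp (-β * x) * (2 * ρ t₀ x ^ 1 * Fx t₀ x)))
      = g 1 - g 0 := by
    exact intervalIntegral.integral_eq_sub_of_hasDerivAt
      (fun x _ => hg' x) (hcont_g'.intervalIntegrable 0 1)
  have hsplit : (∫ x in (0:ℝ)..1, Real.exp (-β * x) * (2 * ρ t₀ x ^ 1 * Fx t₀ x))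
      = g 1 - g 0 + β * L t₀ := by
    have h1 : (∫ x in (0:ℝ)..1, Real.exp (-β * x) * (2 * ρ t₀ x ^ 1 * Fx t₀ x))
        = (∫ x in (0:ℝ)..1,
            (-β * Real.exp (-β * x) * ρ t₀ x ^ 2
              + Real.exp (-β * x) * (2 * ρ t₀ x ^ 1 * Fx t₀ x)))
          + (∫ x in (0:ℝ)..1, β * (Real.exp (-β * x) * ρ t₀ x ^ 2)) := by
      rw [← intervalIntegral.integral_add (g := fun x => β * (Real.exp (-β * x) * ρ t₀ x ^ 2)) (hcont_g'.intervalIntegrable 0 1)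
        ((continuous_const.mul (hFcont t₀)).intervalIntegrable 0 1 :
          IntervalIntegrable (fun x => β * (Real.exp (-β * x) * ρ t₀ x ^ 2)) _ 0 1)]
      congr 1; ext x; ring
    rw [h1, hIBP, intervalIntegral.integral_const_mul]
  -- rewrite integral of G using the PDE
  have hGval : (∫ x in (0:ℝ)..1, G t₀ x)
      = -(lam (W t₀)) * (g 1 - g 0 + β * L t₀) := by
    have hcongr : (∫ x in (0:ℝ)..1, G t₀ x)
        = ∫ x in (0:ℝ)..1,
            -(lam (W t₀)) * (Real.exp (-β * x) * (2 * ρ t₀ x ^ 1 * Fx t₀ x)) := by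
      apply intervalIntegral.integral_congr
      intro x hx
      rw [Set.uIcc_of_le (by norm_num : (0:ℝ) ≤ 1)] at hx
      simp only [hG_def]
      rw [hpde' x hx]
      ring
    rw [hcongr, intervalIntegral.integral_const_mul, hsplit]
  have hgval1 : g 1 = Real.exp (-β) * ρ t₀ 1 ^ 2 := by simp [hg_def]
  have hgval0 : g 0 = ρ t₀ 0 ^ 2 := by simp [hg_def]
  have hderiv : HasDerivAt L (-β * lam (W t₀) * L t₀ +
      lam (W t₀) * (ρ t₀ 0 ^ 2 - Real.exp (-β) * ρ t₀ 1 ^ 2)) t₀ := by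
    have : (∫ x in (0:ℝ)..1, G t₀ x) = -β * lam (W t₀) * L t₀ +
        lam (W t₀) * (ρ t₀ 0 ^ 2 - Real.exp (-β) * ρ t₀ 1 ^ 2) := by
      rw [hGval, hgval1, hgval0]; ring
    rw [← this]
    exact hL'
  have hLpos : 0 ≤ L t₀ := by
    apply intervalIntegral.integral_nonneg (by norm_num)
    intro x _
    positivity
  have hlampos' := hlampos (W t₀)
  refine ⟨hderiv, ?_, ?_⟩
  · have hb : ρ t₀ 0 ^ 2 - Real.exp (-β) * ρ t₀ 1 ^ 2 ≤ 0 := by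
      rw [hbc t₀ ht₀]
      have : (k * ρ t₀ 1) ^ 2 = k ^ 2 * ρ t₀ 1 ^ 2 := by ring
      rw [this]
      nlinarith [sq_nonneg (ρ t₀ 1)]
    nlinarith
  · have := mul_nonneg (mul_nonneg hβ.le hlampos'.le) hLpos
    linarith
end

section
/- Under the hypotheses of the previous statement with additionally ‖ρ₀‖_{L¹(0,1)} ≤ R and |W(t)| ≤ R for all t, setting b := inf_{|s|≤R} λ(s) > 0, one has L̇(t) ≤ -bβL(t), hence L(t) ≤ e^(-bβt)L(0) ≤ e^(-bβt)‖ρ₀‖²_{L²(0,1)}, and therefore ‖ρ(t,·)‖_{L²(0,1)} ≤ e^(β/2)e^(-bβt/2)‖ρ₀‖_{L²(0,1)} for all t ≥ 0 (semi-global exponential stability of 0). -/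
open intervalIntegral MeasureTheory Set

lemma stmt18_hasDeriv (β : ℝ) (ρ : ℝ → ℝ → ℝ)
    (hρ : ContDiff ℝ 1 (fun p : ℝ × ℝ => ρ p.1 p.2)) (t₀ : ℝ) :
    HasDerivAt (fun t => ∫ x in (0:ℝ)..1, Real.exp (-β * x) * ρ t x ^ 2)
      (∫ x in (0:ℝ)..1, Real.exp (-β * x) *
        (2 * ρ t₀ x * fderiv ℝ (fun p : ℝ × ℝ => ρ p.1 p.2) (t₀, x) (1, 0))) t₀ := by
  set F : ℝ × ℝ → ℝ := fun p => ρ p.1 p.2 with hF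
  have hdF : Differentiable ℝ F := hρ.differentiable one_ne_zero
  have hA : ∀ t x : ℝ, HasDerivAt (fun s => ρ s x) (fderiv ℝ F (t, x) (1, 0)) t := by
    intro t x
    exact (hdF (t, x)).hasFDerivAt.comp_hasDerivAt t
      (HasDerivAt.prodMk (hasDerivAt_id t) (hasDerivAt_const t x))
  have hρc : Continuous F := hρ.continuous
  have hρtc : Continuous (fun p : ℝ × ℝ => fderiv ℝ F p (1, 0)) :=
    (hρ.continuous_fderiv one_ne_zero).clm_apply continuous_const
  set G : ℝ → ℝ → ℝ := fun t x => Real.exp (-β * x) * ρ t x ^ 2 with hG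
  set G' : ℝ → ℝ → ℝ := fun t x =>
    Real.exp (-β * x) * (2 * ρ t x * fderiv ℝ F (t, x) (1, 0)) with hG'
  have hGc : Continuous (fun p : ℝ × ℝ => G p.1 p.2) := by
    apply Continuous.mul
    · exact Real.continuous_exp.comp (continuous_const.mul continuous_snd)
    · exact hρc.pow 2
  have hG'c : Continuous (fun p : ℝ × ℝ => G' p.1 p.2) := by
    apply Continuous.mul
    · exact Real.continuous_exp.comp (continuous_const.mul continuous_snd)
    · exact ((continuous_const.mul hρc).mul hρtc)
  have hGdiff : ∀ t x : ℝ, HasDerivAt (fun s => G s x) (G' t x) t := by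
    intro t x
    have h : HasDerivAt (fun y => Real.exp (-β * x) * ρ y x ^ 2) _ t :=
      ((hA t x).fun_pow 2).const_mul (Real.exp (-β * x))
    convert h using 1
    simp [hG']
  obtain ⟨C, hC⟩ := ((isCompact_Icc (a := t₀ - 1) (b := t₀ + 1)).prod
    (isCompact_Icc (a := (0:ℝ)) (b := 1))).exists_bound_of_continuousOn hG'c.continuousOn
  have key := (intervalIntegral.hasDerivAt_integral_of_dominated_loc_of_deriv_le
      (F := G) (F' := G') (x₀ := t₀) (a := (0:ℝ)) (b := 1) (μ := volume)
      (bound := fun _ => C) (Metric.ball_mem_nhds t₀ one_pos)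
      (Filter.Eventually.of_forall fun t =>
        ((hGc.comp (Continuous.prodMk_right t)).aestronglyMeasurable))
      ((hGc.comp (Continuous.prodMk_right t₀)).intervalIntegrable 0 1)
      ((hG'c.comp (Continuous.prodMk_right t₀)).aestronglyMeasurable)
      (Filter.Eventually.of_forall ?_)
      (intervalIntegrable_const)
      (Filter.Eventually.of_forall fun x _ t _ => hGdiff t x)).2
  · exact key
  · intro x hx t ht
    have hx' : x ∈ Set.Ioc (0:ℝ) 1 := by rwa [Set.uIoc_of_le zero_le_one] at hx
    have ht' : dist t t₀ < 1 := Metric.mem_ball.mp ht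
    rw [Real.dist_eq, abs_sub_lt_iff] at ht'
    exact hC ((t, x)) ⟨⟨by linarith [ht'.1, ht'.2], by linarith [ht'.1, ht'.2]⟩,
      ⟨hx'.1.le, hx'.2⟩⟩

open intervalIntegral

theorem stmt_18 (lam : ℝ → ℝ) (hlam : Continuous lam) (hlampos : ∀ s, 0 < lam s)
    (k β R : ℝ) (hk : k ∈ Set.Ioo (-1:ℝ) 1) (hβ : 0 < β)
    (hβk : k ^ 2 < Real.exp (-β)) (hR : 0 < R) (ρ : ℝ → ℝ → ℝ) (ρ₀ : ℝ → ℝ)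
    (hρ : ContDiff ℝ 1 (fun p : ℝ × ℝ => ρ p.1 p.2))
    (hpde : ∀ t ≥ (0:ℝ), ∀ x ∈ Set.Icc (0:ℝ) 1,
      deriv (fun s => ρ s x) t +
        lam (∫ y in (0:ℝ)..1, ρ t y) * deriv (fun y => ρ t y) x = 0)
    (hbc : ∀ t ≥ (0:ℝ), ρ t 0 = k * ρ t 1)
    (hinit : ∀ x ∈ Set.Icc (0:ℝ) 1, ρ 0 x = ρ₀ x)
    (hρ₀ : (∫ x in (0:ℝ)..1, |ρ₀ x|) ≤ R)
    (hW : ∀ t ≥ (0:ℝ), |∫ x in (0:ℝ)..1, ρ t x| ≤ R) :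
    let b := sInf (lam '' Set.Icc (-R) R)
    let L := fun t => ∫ x in (0:ℝ)..1, Real.exp (-β * x) * ρ t x ^ 2
    0 < b ∧
    (∀ t ≥ (0:ℝ), ∃ D : ℝ, HasDerivAt L D t ∧ D ≤ -b * β * L t) ∧
    (∀ t ≥ (0:ℝ), L t ≤ Real.exp (-b * β * t) * L 0 ∧
      Real.exp (-b * β * t) * L 0 ≤
        Real.exp (-b * β * t) * ∫ x in (0:ℝ)..1, ρ₀ x ^ 2) ∧
    (∀ t ≥ (0:ℝ),
      Real.sqrt (∫ x in (0:ℝ)..1, ρ t x ^ 2) ≤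
        Real.exp (β / 2) * Real.exp (-b * β * t / 2) *
          Real.sqrt (∫ x in (0:ℝ)..1, ρ₀ x ^ 2)) := by
  intro b L
  set F : ℝ × ℝ → ℝ := fun p => ρ p.1 p.2 with hF
  have hdF : Differentiable ℝ F := hρ.differentiable one_ne_zero
  have hρc : Continuous F := hρ.continuous
  have hA : ∀ t x : ℝ, HasDerivAt (fun s => ρ s x) (fderiv ℝ F (t, x) (1, 0)) t := fun t x => by
    exact (hdF (t, x)).hasFDerivAt.comp_hasDerivAt t
      (HasDerivAt.prodMk (hasDerivAt_id t) (hasDerivAt_const t x))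
  have hB : ∀ t x : ℝ, HasDerivAt (fun y => ρ t y) (fderiv ℝ F (t, x) (0, 1)) x := fun t x =>
    (hdF (t, x)).hasFDerivAt.comp_hasDerivAt x
      (HasDerivAt.prodMk (hasDerivAt_const x t) (hasDerivAt_id x))
  have hρxc : Continuous (fun p : ℝ × ℝ => fderiv ℝ F p (0, 1)) :=
    (hρ.continuous_fderiv one_ne_zero).clm_apply continuous_const
  -- part 1 : 0 < b
  have hne : (Set.Icc (-R) R).Nonempty := ⟨0, by constructor <;> linarith⟩
  obtain ⟨s₀, hs₀, heq⟩ := (isCompact_Icc (a := -R) (b := R)).exists_sInf_image_eq hne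
      hlam.continuousOn
  have hbpos : 0 < b := by rw [show b = lam s₀ from heq]; exact hlampos s₀
  have hbdd : BddBelow (lam '' Set.Icc (-R) R) :=
    ⟨0, fun y hy => by obtain ⟨s, _, rfl⟩ := hy; exact (hlampos s).le⟩
  have hble : ∀ w : ℝ, |w| ≤ R → b ≤ lam w := by
    intro w hw
    have := abs_le.mp hw
    exact csInf_le hbdd ⟨w, ⟨this.1, this.2⟩, rfl⟩
  -- nonnegativity of L
  have hLnn : ∀ t, 0 ≤ L t := fun t =>
    intervalIntegral.integral_nonneg zero_le_one
      (fun x _ => mul_nonneg (Real.exp_nonneg _) (sq_nonneg _))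
  -- part 2 : derivative estimate
  have hkey : ∀ t ≥ (0:ℝ), ∃ D : ℝ, HasDerivAt L D t ∧ D ≤ -b * β * L t := by
    intro t ht
    refine ⟨_, stmt18_hasDeriv β ρ hρ t, ?_⟩
    set lamW := lam (∫ y in (0:ℝ)..1, ρ t y) with hlamW
    have hWt : b ≤ lamW := hble _ (hW t ht)
    have hlamWpos : 0 < lamW := hlampos _
    -- rewrite the derivative using the PDE
    have hpde' : ∀ x ∈ Set.Icc (0:ℝ) 1,
        fderiv ℝ F (t, x) (1, 0) = -(lamW * fderiv ℝ F (t, x) (0, 1)) := by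
      intro x hx
      have h := hpde t ht x hx
      rw [(hA t x).deriv, (hB t x).deriv] at h
      linarith
    have hDeq : (∫ x in (0:ℝ)..1, Real.exp (-β * x) *
          (2 * ρ t x * fderiv ℝ F (t, x) (1, 0)))
        = -lamW * ∫ x in (0:ℝ)..1, Real.exp (-β * x) *
          (2 * ρ t x * fderiv ℝ F (t, x) (0, 1)) := by
      rw [← intervalIntegral.integral_const_mul]
      apply intervalIntegral.integral_congr
      intro x hx
      rw [Set.uIcc_of_le zero_le_one] at hx
      simp only [hpde' x hx]; ring
    -- integration by parts
    have hIBP : (∫ x in (0:ℝ)..1, Real.exp (-β * x) *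
          (2 * ρ t x * fderiv ℝ F (t, x) (0, 1)))
        = (Real.exp (-β) - k ^ 2) * ρ t 1 ^ 2 + β * L t := by
      have hu : ∀ x ∈ Set.uIcc (0:ℝ) 1,
          HasDerivAt (fun y => Real.exp (-β * y)) (-β * Real.exp (-β * x)) x := by
        intro x _
        have h := ((hasDerivAt_id x).const_mul (-β)).exp
        simpa [mul_comm] using h
      have hv : ∀ x ∈ Set.uIcc (0:ℝ) 1,
          HasDerivAt (fun y => ρ t y ^ 2) (2 * ρ t x * fderiv ℝ F (t, x) (0, 1)) x := by
        intro x _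
        have h := (hB t x).fun_pow 2
        simpa using h
      have hu' : IntervalIntegrable (fun x => -β * Real.exp (-β * x)) volume 0 1 :=
        (continuous_const.mul
          (Real.continuous_exp.comp (continuous_const.mul continuous_id))).intervalIntegrable 0 1
      have hv' : IntervalIntegrable
          (fun x => 2 * ρ t x * fderiv ℝ F (t, x) (0, 1)) volume 0 1 := by
        apply Continuous.intervalIntegrable
        exact ((continuous_const.mul (hρc.comp (Continuous.prodMk_right t))).mul
          (hρxc.comp (Continuous.prodMk_right t)))
      have h := intervalIntegral.integral_mul_deriv_eq_deriv_mul hu hv hu' hv'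
      rw [h, hbc t ht]
      have h2 : (∫ x in (0:ℝ)..1, -β * Real.exp (-β * x) * ρ t x ^ 2) = -β * L t := by
        rw [← intervalIntegral.integral_const_mul]
        apply intervalIntegral.integral_congr
        intro x _; ring
      rw [h2]
      simp only [mul_one, mul_zero, neg_zero, Real.exp_zero, one_mul]
      ring
    rw [hDeq, hIBP]
    have hterm : 0 ≤ (Real.exp (-β) - k ^ 2) * ρ t 1 ^ 2 :=
      mul_nonneg (by linarith) (sq_nonneg _)
    have hβL : 0 ≤ β * L t := mul_nonneg hβ.le (hLnn t)
    nlinarith [mul_le_mul_of_nonneg_right hWt hβL,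
      mul_le_mul_of_nonneg_left hterm hlamWpos.le]
  -- Gronwall
  have hdecay : ∀ t ≥ (0:ℝ), L t ≤ Real.exp (-b * β * t) * L 0 := by
    intro t ht
    set g : ℝ → ℝ := fun s => Real.exp (b * β * s) * L s with hg
    have hgderiv : ∀ s ≥ (0:ℝ), ∃ D : ℝ, HasDerivAt g D s ∧ D ≤ 0 := by
      intro s hs
      obtain ⟨D, hD, hDle⟩ := hkey s hs
      have he : HasDerivAt (fun u => Real.exp (b * β * u))
          (b * β * Real.exp (b * β * s)) s := by
        have h := ((hasDerivAt_id s).const_mul (b * β)).exp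
        simpa [mul_comm] using h
      have h := he.mul hD
      refine ⟨_, h, ?_⟩
      have : b * β * Real.exp (b * β * s) * L s + Real.exp (b * β * s) * D
          = Real.exp (b * β * s) * (b * β * L s + D) := by ring
      rw [this]
      apply mul_nonpos_of_nonneg_of_nonpos (Real.exp_nonneg _)
      nlinarith
    have hanti : AntitoneOn g (Set.Ici (0:ℝ)) := by
      apply antitoneOn_of_deriv_nonpos (convex_Ici 0)
      · intro s hs
        obtain ⟨D, hD, _⟩ := hgderiv s hs
        exact hD.continuousAt.continuousWithinAt
      · intro s hs
        rw [interior_Ici] at hs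
        obtain ⟨D, hD, _⟩ := hgderiv s hs.le
        exact hD.differentiableAt.differentiableWithinAt
      · intro s hs
        rw [interior_Ici] at hs
        obtain ⟨D, hD, hDle⟩ := hgderiv s hs.le
        rw [hD.deriv]; exact hDle
    have hgle : g t ≤ g 0 := hanti (Set.self_mem_Ici) ht ht
    have hg0 : g 0 = L 0 := by simp [hg]
    have := mul_le_mul_of_nonneg_left hgle (Real.exp_nonneg (-b * β * t))
    calc L t = Real.exp (-b * β * t) * g t := by
          rw [hg]; simp only [← mul_assoc, ← Real.exp_add]
          ring_nf; rw [Real.exp_zero, one_mul]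
      _ ≤ Real.exp (-b * β * t) * g 0 := this
      _ = Real.exp (-b * β * t) * L 0 := by rw [hg0]
  -- L 0 ≤ ∫ ρ₀²
  have hρ0eq : (∫ x in (0:ℝ)..1, ρ₀ x ^ 2) = ∫ x in (0:ℝ)..1, ρ 0 x ^ 2 := by
    apply intervalIntegral.integral_congr
    intro x hx
    rw [Set.uIcc_of_le zero_le_one] at hx
    simp only [hinit x hx]
  have hL0le : L 0 ≤ ∫ x in (0:ℝ)..1, ρ₀ x ^ 2 := by
    rw [hρ0eq]
    apply intervalIntegral.integral_mono_on zero_le_one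
    · exact (((Real.continuous_exp.comp (continuous_const.mul continuous_id)).mul
        ((hρc.comp (Continuous.prodMk_right 0)).pow 2))).intervalIntegrable 0 1
    · exact ((hρc.comp (Continuous.prodMk_right 0)).pow 2).intervalIntegrable 0 1
    · intro x hx
      apply mul_le_of_le_one_left (sq_nonneg _)
      rw [Real.exp_le_one_iff]
      nlinarith [hx.1]
  refine ⟨hbpos, hkey, ?_, ?_⟩
  · intro t ht
    exact ⟨hdecay t ht, mul_le_mul_of_nonneg_left hL0le (Real.exp_nonneg _)⟩
  -- final estimate
  · intro t ht
    have h1 : (∫ x in (0:ℝ)..1, ρ t x ^ 2) ≤ Real.exp β * L t := by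
      rw [← intervalIntegral.integral_const_mul]
      apply intervalIntegral.integral_mono_on zero_le_one
      · exact ((hρc.comp (Continuous.prodMk_right t)).pow 2).intervalIntegrable 0 1
      · apply Continuous.intervalIntegrable
        exact continuous_const.mul ((Real.continuous_exp.comp
          (continuous_const.mul continuous_id)).mul
          ((hρc.comp (Continuous.prodMk_right t)).pow 2))
      · intro x hx
        have : Real.exp β * (Real.exp (-β * x) * ρ t x ^ 2)
            = Real.exp (β + -β * x) * ρ t x ^ 2 := by
          rw [Real.exp_add]; ring
        rw [this]
        apply le_mul_of_one_le_left (sq_nonneg _)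
        exact Real.one_le_exp (by nlinarith [hx.2])
    have h2 : L t ≤ Real.exp (-b * β * t) * L 0 := hdecay t ht
    have h3 : (∫ x in (0:ℝ)..1, ρ t x ^ 2)
        ≤ Real.exp β * (Real.exp (-b * β * t) * ∫ x in (0:ℝ)..1, ρ₀ x ^ 2) := by
      calc (∫ x in (0:ℝ)..1, ρ t x ^ 2) ≤ Real.exp β * L t := h1
        _ ≤ Real.exp β * (Real.exp (-b * β * t) * ∫ x in (0:ℝ)..1, ρ₀ x ^ 2) := by
            apply mul_le_mul_of_nonneg_left _ (Real.exp_nonneg _)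
            calc L t ≤ Real.exp (-b * β * t) * L 0 := h2
              _ ≤ Real.exp (-b * β * t) * ∫ x in (0:ℝ)..1, ρ₀ x ^ 2 :=
                  mul_le_mul_of_nonneg_left hL0le (Real.exp_nonneg _)
    have h4 := Real.sqrt_le_sqrt h3
    rwa [Real.sqrt_mul (Real.exp_nonneg _), Real.sqrt_mul (Real.exp_nonneg _),
      ← Real.exp_half, ← Real.exp_half, ← mul_assoc] at h4
end

section
/- Let k ∈ (-1,1) and r ∈ (1,2]. For any C¹ solution ρ of ρ_t + λ(W(t))ρ_x = 0 on (0,∞)×(0,1) with λ(W(t)) > 0 and boundary condition ρ(t,0) = kρ(t,1), the function t ↦ ∫₀¹|ρ(t,x)|^r dx is nonincreasing; consequently (letting r → 1⁺) t ↦ ∫₀¹|ρ(t,x)| dx is nonincreasing, so |W(t)| ≤ ‖ρ(0,·)‖_{L¹(0,1)} for all t ≥ 0. -/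
open intervalIntegral
open MeasureTheory Metric Filter Topology

lemma stmt19_partialT {f : ℝ × ℝ → ℝ} (hf : ContDiff ℝ 1 f) (t x : ℝ) :
    HasDerivAt (fun s => f (s, x)) (fderiv ℝ f (t, x) (1, 0)) t :=
  ((hf.differentiable one_ne_zero (t, x)).hasFDerivAt).comp_hasDerivAt t
    ((hasDerivAt_id t).prodMk (hasDerivAt_const t x))

lemma stmt19_partialX {f : ℝ × ℝ → ℝ} (hf : ContDiff ℝ 1 f) (t x : ℝ) :
    HasDerivAt (fun y => f (t, y)) (fderiv ℝ f (t, x) (0, 1)) x :=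
  ((hf.differentiable one_ne_zero (t, x)).hasFDerivAt).comp_hasDerivAt x
    ((hasDerivAt_const x t).prodMk (hasDerivAt_id x))

lemma stmt19_aux (lam : ℝ → ℝ) (hlampos : ∀ s, 0 < lam s)
    (k r : ℝ) (hk : k ∈ Set.Ioo (-1:ℝ) 1) (hr : r ∈ Set.Ioc (1:ℝ) 2)
    (ρ : ℝ → ℝ → ℝ)
    (hρ : ContDiff ℝ 1 (fun p : ℝ × ℝ => ρ p.1 p.2))
    (hpde : ∀ t ≥ (0:ℝ), ∀ x ∈ Set.Icc (0:ℝ) 1,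
      deriv (fun s => ρ s x) t +
        lam (∫ y in (0:ℝ)..1, ρ t y) * deriv (fun y => ρ t y) x = 0)
    (hbc : ∀ t ≥ (0:ℝ), ρ t 0 = k * ρ t 1) :
    AntitoneOn (fun t => ∫ x in (0:ℝ)..1, |ρ t x| ^ r) (Set.Ici 0) := by
  obtain ⟨hr1, hr2⟩ := hr
  set F : ℝ × ℝ → ℝ := fun p => |ρ p.1 p.2| ^ r with hFdef
  have hF : ContDiff ℝ 1 F := by
    have := (contDiff_norm_rpow (E := ℝ) hr1).comp hρ
    simpa [Real.norm_eq_abs, Function.comp_def] using this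
  have hFc : Continuous F := hF.continuous
  have hF't : Continuous (fun p : ℝ × ℝ => fderiv ℝ F p (1, 0)) :=
    (hF.continuous_fderiv one_ne_zero).clm_apply continuous_const
  -- the integral is differentiable everywhere, with derivative given by differentiation
  -- under the integral sign
  have hG : ∀ t₀ : ℝ, HasDerivAt (fun t => ∫ x in (0:ℝ)..1, F (t, x))
      (∫ x in (0:ℝ)..1, fderiv ℝ F (t₀, x) (1, 0)) t₀ := by
    intro t₀
    obtain ⟨C, hC⟩ := (IsCompact.prod (isCompact_Icc (a := t₀ - 1) (b := t₀ + 1))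
      (isCompact_Icc (a := (0:ℝ)) (b := 1))).exists_bound_of_continuousOn hF't.continuousOn
    refine (intervalIntegral.hasDerivAt_integral_of_dominated_loc_of_deriv_le
      (F := fun t x => F (t, x)) (F' := fun t x => fderiv ℝ F (t, x) (1, 0))
      (bound := fun _ => C) (ball_mem_nhds t₀ one_pos) ?_ ?_ ?_ ?_ ?_ ?_).2
    · exact Filter.Eventually.of_forall fun t =>
        (hFc.comp (Continuous.prodMk_right t)).aestronglyMeasurable
    · exact ((hFc.comp (Continuous.prodMk_right t₀)).intervalIntegrable 0 1)
    · exact (hF't.comp (Continuous.prodMk_right t₀)).aestronglyMeasurable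
    · refine Filter.Eventually.of_forall fun x hx t ht => hC _ ⟨?_, ?_⟩
      · rw [mem_ball, Real.dist_eq] at ht
        constructor <;> [linarith [abs_lt.1 ht |>.1]; linarith [abs_lt.1 ht |>.2]]
      · rcases Set.uIoc_of_le (by norm_num : (0:ℝ) ≤ 1) ▸ hx with ⟨h1, h2⟩
        exact ⟨le_of_lt h1, h2⟩
    · exact intervalIntegrable_const
    · exact Filter.Eventually.of_forall fun x _ t _ => stmt19_partialT hF t x
  -- the derivative is nonpositive for t₀ ≥ 0
  have hnonpos : ∀ t₀ ≥ (0:ℝ), (∫ x in (0:ℝ)..1, fderiv ℝ F (t₀, x) (1, 0)) ≤ 0 := by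
    intro t₀ ht₀
    set L := lam (∫ y in (0:ℝ)..1, ρ t₀ y) with hL
    have hLpos : 0 < L := hlampos _
    have key : ∀ x ∈ Set.Icc (0:ℝ) 1,
        fderiv ℝ F (t₀, x) (1, 0) = -L * fderiv ℝ F (t₀, x) (0, 1) := by
      intro x hx
      have hchainT : HasDerivAt (fun s => F (s, x))
          ((r * |ρ t₀ x| ^ (r - 2) * ρ t₀ x) *
            fderiv ℝ (fun p : ℝ × ℝ => ρ p.1 p.2) (t₀, x) (1, 0)) t₀ := by
        rw [hFdef]
        exact (hasDerivAt_abs_rpow (ρ t₀ x) hr1).comp t₀ (stmt19_partialT hρ t₀ x)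
      have hchainX : HasDerivAt (fun y => F (t₀, y))
          ((r * |ρ t₀ x| ^ (r - 2) * ρ t₀ x) *
            fderiv ℝ (fun p : ℝ × ℝ => ρ p.1 p.2) (t₀, x) (0, 1)) x := by
        rw [hFdef]
        exact (hasDerivAt_abs_rpow (ρ t₀ x) hr1).comp x (stmt19_partialX hρ t₀ x)
      have e1 := (stmt19_partialT hF t₀ x).unique hchainT
      have e2 := (stmt19_partialX hF t₀ x).unique hchainX
      have e3 : deriv (fun s => ρ s x) t₀ =
          fderiv ℝ (fun p : ℝ × ℝ => ρ p.1 p.2) (t₀, x) (1, 0) :=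
        (stmt19_partialT hρ t₀ x).deriv
      have e4 : deriv (fun y => ρ t₀ y) x =
          fderiv ℝ (fun p : ℝ × ℝ => ρ p.1 p.2) (t₀, x) (0, 1) :=
        (stmt19_partialX hρ t₀ x).deriv
      have hp := hpde t₀ ht₀ x hx
      rw [e3, e4, ← hL] at hp
      have h5 : fderiv ℝ (fun p : ℝ × ℝ => ρ p.1 p.2) (t₀, x) (1, 0) =
          -L * fderiv ℝ (fun p : ℝ × ℝ => ρ p.1 p.2) (t₀, x) (0, 1) := by linarith
      rw [e1, e2, h5]; ring
    have hcongr : (∫ x in (0:ℝ)..1, fderiv ℝ F (t₀, x) (1, 0)) =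
        ∫ x in (0:ℝ)..1, -L * fderiv ℝ F (t₀, x) (0, 1) := by
      refine intervalIntegral.integral_congr fun x hx => ?_
      exact key x (by rwa [Set.uIcc_of_le (by norm_num : (0:ℝ) ≤ 1)] at hx)
    have hF'x : Continuous (fun p : ℝ × ℝ => fderiv ℝ F p (0, 1)) :=
      (hF.continuous_fderiv one_ne_zero).clm_apply continuous_const
    have hftc : (∫ x in (0:ℝ)..1, fderiv ℝ F (t₀, x) (0, 1)) = F (t₀, 1) - F (t₀, 0) := by
      refine intervalIntegral.integral_eq_sub_of_hasDerivAt
        (fun x _ => stmt19_partialX hF t₀ x) ?_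
      exact ((hF'x.comp (Continuous.prodMk_right t₀)).intervalIntegrable 0 1)
    have hbd : F (t₀, 0) ≤ F (t₀, 1) := by
      rw [hFdef]
      simp only
      rw [hbc t₀ ht₀, abs_mul, Real.mul_rpow (abs_nonneg _) (abs_nonneg _)]
      have h1 : |k| ^ r ≤ 1 :=
        Real.rpow_le_one (abs_nonneg k) (abs_le.2 ⟨hk.1.le, hk.2.le⟩) (by linarith)
      nlinarith [Real.rpow_nonneg (abs_nonneg (ρ t₀ 1)) r]
    rw [hcongr, intervalIntegral.integral_const_mul, hftc]
    nlinarith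
  have hdiff : Differentiable ℝ (fun t => ∫ x in (0:ℝ)..1, F (t, x)) :=
    fun t => (hG t).differentiableAt
  have hanti : AntitoneOn (fun t => ∫ x in (0:ℝ)..1, F (t, x)) (Set.Ici 0) := by
    refine antitoneOn_of_deriv_nonpos (convex_Ici 0) hdiff.continuous.continuousOn
      (fun t _ => (hdiff t).differentiableWithinAt) ?_
    intro t ht
    rw [interior_Ici] at ht
    rw [(hG t).deriv]
    exact hnonpos t (le_of_lt ht)
  exact hanti

theorem stmt_19 (lam : ℝ → ℝ) (hlam : Continuous lam) (hlampos : ∀ s, 0 < lam s)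
    (k r : ℝ) (hk : k ∈ Set.Ioo (-1:ℝ) 1) (hr : r ∈ Set.Ioc (1:ℝ) 2)
    (ρ : ℝ → ℝ → ℝ)
    (hρ : ContDiff ℝ 1 (fun p : ℝ × ℝ => ρ p.1 p.2))
    (hpde : ∀ t ≥ (0:ℝ), ∀ x ∈ Set.Icc (0:ℝ) 1,
      deriv (fun s => ρ s x) t +
        lam (∫ y in (0:ℝ)..1, ρ t y) * deriv (fun y => ρ t y) x = 0)
    (hbc : ∀ t ≥ (0:ℝ), ρ t 0 = k * ρ t 1) :
    AntitoneOn (fun t => ∫ x in (0:ℝ)..1, |ρ t x| ^ r) (Set.Ici 0) ∧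
    AntitoneOn (fun t => ∫ x in (0:ℝ)..1, |ρ t x|) (Set.Ici 0) ∧
    ∀ t ≥ (0:ℝ), |∫ x in (0:ℝ)..1, ρ t x| ≤ ∫ x in (0:ℝ)..1, |ρ 0 x| := by
  have h1 : ∀ r' ∈ Set.Ioc (1:ℝ) 2,
      AntitoneOn (fun t => ∫ x in (0:ℝ)..1, |ρ t x| ^ r') (Set.Ici 0) :=
    fun r' hr' => stmt19_aux lam hlampos k r' hk hr' ρ hρ hpde hbc
  -- the sequence of exponents tending to 1 from above
  set rn : ℕ → ℝ := fun n => 1 + 1 / (n + 1) with hrn_def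
  have hrn : ∀ n, rn n ∈ Set.Ioc (1:ℝ) 2 := by
    intro n
    have h01 : (0:ℝ) < (n:ℝ) + 1 := by positivity
    constructor
    · have : (0:ℝ) < 1 / ((n:ℝ) + 1) := by positivity
      simp only [hrn_def]; linarith
    · have : 1 / ((n:ℝ) + 1) ≤ 1 := by
        rw [div_le_one h01]; linarith [Nat.cast_nonneg (α := ℝ) n]
      simp only [hrn_def]; linarith
  have hrnlim : Tendsto rn atTop (𝓝 1) := by
    have := tendsto_one_div_add_atTop_nhds_zero_nat (𝕜 := ℝ)
    simpa [hrn_def] using tendsto_const_nhds.add this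
  have htend : ∀ t : ℝ, Tendsto (fun n : ℕ => ∫ x in (0:ℝ)..1, |ρ t x| ^ rn n)
      atTop (𝓝 (∫ x in (0:ℝ)..1, |ρ t x|)) := by
    intro t
    have hcρ : Continuous fun x => ρ t x := hρ.continuous.comp (Continuous.prodMk_right t)
    simp only [intervalIntegral.integral_of_le (zero_le_one (α := ℝ))]
    refine MeasureTheory.tendsto_integral_of_dominated_convergence
      (bound := fun x => 1 + |ρ t x| ^ (2:ℝ)) ?_ ?_ ?_ ?_
    · intro n
      have hcont : Continuous fun x => |ρ t x| ^ rn n := by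
        have := (contDiff_norm_rpow (E := ℝ) (hrn n).1).continuous.comp hcρ
        simpa [Real.norm_eq_abs, Function.comp_def] using this
      exact hcont.aestronglyMeasurable
    · have hcont : Continuous fun x => 1 + |ρ t x| ^ (2:ℝ) := by
        have := (contDiff_norm_rpow (E := ℝ) one_lt_two).continuous.comp hcρ
        exact continuous_const.add (by simpa [Real.norm_eq_abs, Function.comp_def] using this)
      exact hcont.integrableOn_Ioc
    · intro n
      refine Filter.Eventually.of_forall fun x => ?_
      show ‖|ρ t x| ^ rn n‖ ≤ 1 + |ρ t x| ^ (2:ℝ)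
      rw [Real.norm_eq_abs, abs_of_nonneg (Real.rpow_nonneg (abs_nonneg _) _)]
      rcases le_or_gt (|ρ t x|) 1 with h | h
      · have hle : |ρ t x| ^ rn n ≤ 1 :=
          Real.rpow_le_one (abs_nonneg _) h (by linarith [(hrn n).1])
        have h2 : (0:ℝ) ≤ |ρ t x| ^ (2:ℝ) := Real.rpow_nonneg (abs_nonneg _) _
        linarith
      · have hle : |ρ t x| ^ rn n ≤ |ρ t x| ^ (2:ℝ) :=
          Real.rpow_le_rpow_of_exponent_le h.le (hrn n).2
        linarith
    · refine Filter.Eventually.of_forall fun x => ?_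
      rcases eq_or_ne (|ρ t x|) 0 with h | h
      · simp only [h]
        have hz : ∀ n, (0:ℝ) ^ rn n = 0 :=
          fun n => Real.zero_rpow (by linarith [(hrn n).1])
        simpa [hz] using tendsto_const_nhds (x := (0:ℝ)) (f := atTop (α := ℕ))
      · have := (Real.continuousAt_const_rpow (a := |ρ t x|) h).tendsto.comp hrnlim
        simpa [Real.rpow_one, Function.comp_def] using this
  have h2 : AntitoneOn (fun t => ∫ x in (0:ℝ)..1, |ρ t x|) (Set.Ici 0) := by
    intro a ha b hb hab
    exact le_of_tendsto_of_tendsto' (htend b) (htend a)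
      (fun n => h1 (rn n) (hrn n) ha hb hab)
  refine ⟨h1 r hr, h2, fun t ht => ?_⟩
  calc |∫ x in (0:ℝ)..1, ρ t x| ≤ ∫ x in (0:ℝ)..1, |ρ t x| :=
        intervalIntegral.abs_integral_le_integral_abs zero_le_one
    _ ≤ ∫ x in (0:ℝ)..1, |ρ 0 x| := h2 Set.self_mem_Ici ht ht
end
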